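/- arXiv:2307.06792 — 5 statements merged into one kernel-verified Lean document; each statement's English description precedes it below -/
import Mathlib

section
/- Let b and v be binary vectors of length k, let j ∈ [k-1], and suppose that the reversal of the length-j prefix of b encodes (in big-endian binary) a number strictly smaller than that of v, while the reversal of the length-(j+1) prefix of b encodes a number strictly larger than that of v. Then b_{j+1} = 1 and v_{j+1} = 0, and there exists an index i ∈ [j] with b_i = 0, v_i = 1, and b_h = v_h for all h with i < h < j+1. -/
open Finset

/-- Big-endian binary decoding of a bit vector: `∑ i, b i · 2^(k-i)` (1-based). -/
def decodeBE (k : ℕ) (b : Fin k → Bool) : ℕ :=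
  ∑ i : Fin k, if b i then 2 ^ (k - 1 - (i : ℕ)) else 0

/-- `prefRev k i b` is the vector obtained from `b` by reversing its prefix of length `i`. -/
def prefRev (k i : ℕ) (b : Fin k → Bool) : Fin k → Bool :=
  fun h => if hh : (h : ℕ) < i ∧ i ≤ k then b ⟨i - 1 - (h : ℕ), by omega⟩ else b h

def extBit (k : ℕ) (b : Fin k → Bool) : ℕ → Bool :=
  fun i => if h : i < k then b ⟨i, h⟩ else false

lemma sum_pow_lt (B : ℕ → Bool) (n : ℕ) :
    (∑ i ∈ Finset.range n, if B i then 2^i else 0) < 2^n := by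
  induction n with
  | zero => simp
  | succ n ih =>
    rw [Finset.sum_range_succ, pow_succ]
    split <;> omega

lemma sum_pow_lt' (B : ℕ → Bool) (n : ℕ) :
    (∑ i ∈ Finset.range n, if B i then 2^(n-1-i) else 0) < 2^n := by
  have h1 : (∑ i ∈ Finset.range n, if B i then 2^(n-1-i) else 0)
      = ∑ i ∈ Finset.range n, if B (n-1-i) then 2^i else 0 := by
    rw [← Finset.sum_range_reflect]
    apply Finset.sum_congr rfl
    intro i hi
    simp only [Finset.mem_range] at hi
    congr 2
    omega
  rw [h1]
  exact sum_pow_lt _ n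

lemma diffBit (f g : ℕ → Bool) (j : ℕ)
    (h : (∑ i ∈ Finset.range j, if f i then 2^i else 0) <
         ∑ i ∈ Finset.range j, if g i then 2^i else 0) :
    ∃ i < j, f i = false ∧ g i = true ∧ ∀ h', i < h' → h' < j → f h' = g h' := by
  induction j with
  | zero => simp at h
  | succ m ih =>
    rw [Finset.sum_range_succ, Finset.sum_range_succ] at h
    by_cases hfg : f m = g m
    · have h' : (∑ i ∈ Finset.range m, if f i then 2^i else 0) <
          ∑ i ∈ Finset.range m, if g i then 2^i else 0 := by
        rw [hfg] at h; split at h <;> omega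
      obtain ⟨i, hi, hf, hg, hall⟩ := ih h'
      exact ⟨i, by omega, hf, hg, fun h' h1 h2 => by
        rcases Nat.lt_succ_iff_lt_or_eq.mp h2 with h2 | h2
        · exact hall h' h1 h2
        · subst h2; exact hfg⟩
    · have hfm : f m = false ∧ g m = true := by
        by_contra hc
        have hf : f m = true := by
          cases hf : f m <;> cases hg : g m <;> simp_all
        have hg : g m = false := by
          cases hg : g m <;> simp_all
        rw [hf, hg] at h
        simp only [show (false = true) = False by simp, show (true = true) = True by simp, if_true, if_false] at h
        have := sum_pow_lt g m
        omega
      exact ⟨m, Nat.lt_succ_self m, hfm.1, hfm.2, fun h' h1 h2 => by omega⟩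

lemma decode_split (k m : ℕ) (hm : m ≤ k) (b : Fin k → Bool) :
    decodeBE k (prefRev k m b) =
      2^(k-m) * (∑ i ∈ Finset.range m, if extBit k b i then 2^i else 0)
      + ∑ i ∈ Finset.Ico m k, if extBit k b i then 2^(k-1-i) else 0 := by
  have h0 : decodeBE k (prefRev k m b) =
      ∑ i ∈ Finset.range k, if extBit k (prefRev k m b) i then 2^(k-1-i) else 0 := by
    rw [decodeBE, ← Fin.sum_univ_eq_sum_range]
    apply Finset.sum_congr rfl
    intro i _
    simp [extBit, i.isLt]
  rw [h0, Finset.range_eq_Ico, ← Finset.sum_Ico_consecutive _ (Nat.zero_le m) hm,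
    ← Finset.range_eq_Ico]
  congr 1
  · have h1 : ∀ i ∈ Finset.range m,
        (if extBit k (prefRev k m b) i then 2^(k-1-i) else 0)
        = (fun i => if extBit k b i then 2^(k-m) * 2^i else 0) (m-1-i) := by
      intro i hi
      simp only [Finset.mem_range] at hi
      have hik : i < k := by omega
      have hmk : m - 1 - i < k := by omega
      simp only [extBit, prefRev, hik, hmk, dif_pos, dite_true]
      have : (⟨i, hik⟩ : Fin k).val < m ∧ m ≤ k := ⟨hi, hm⟩
      rw [dif_pos this]
      have he : 2^(k-1-i) = 2^(k-m) * 2^(m-1-i) := by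
        rw [← pow_add]; congr 1; omega
      split <;> simp_all
    rw [Finset.sum_congr rfl h1,
      Finset.sum_range_reflect (fun i => if extBit k b i = true then 2^(k-m) * 2^i else 0) m,
      Finset.mul_sum]
    apply Finset.sum_congr rfl
    intro i _
    split <;> simp
  · apply Finset.sum_congr rfl
    intro i hi
    simp only [Finset.mem_Ico] at hi
    simp only [extBit, prefRev, hi.2, dif_pos]
    have : ¬((⟨i, hi.2⟩ : Fin k).val < m ∧ m ≤ k) := by simp; omega
    rw [dif_neg this]

/-- If the reversed length-`j` prefix of `b` decodes to a smaller number than that of `v`,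
but the reversed length-`(j+1)` prefix of `b` decodes to a larger number than that of `v`,
then `b_{j+1} = 1`, `v_{j+1} = 0`, and there is an index `i ∈ [j]` with `b_i = 0`, `v_i = 1`
and `b_h = v_h` for all `i < h < j+1`.  (Indices here are 0-based shifts of the 1-based ones.) -/
theorem stmt0 (k j : ℕ) (b v : Fin k → Bool) (hj1 : 1 ≤ j) (hjk : j + 1 ≤ k)
    (hlt : decodeBE k (prefRev k j b) < decodeBE k (prefRev k j v))
    (hgt : decodeBE k (prefRev k (j + 1) v) < decodeBE k (prefRev k (j + 1) b)) :
    b ⟨j, by omega⟩ = true ∧ v ⟨j, by omega⟩ = false ∧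
      ∃ i : ℕ, ∃ hi : i < j, b ⟨i, by omega⟩ = false ∧ v ⟨i, by omega⟩ = true ∧
        ∀ h : ℕ, ∀ hh : i < h ∧ h < j, b ⟨h, by omega⟩ = v ⟨h, by omega⟩ := by
  set B := extBit k b with hB
  set V := extBit k v with hV
  -- abbreviations
  set A := ∑ i ∈ Finset.range j, if B i then 2^i else 0 with hA
  set A' := ∑ i ∈ Finset.range j, if V i then 2^i else 0 with hA'
  set Sb1 := ∑ i ∈ Finset.Ico (j+1) k, if B i then 2^(k-1-i) else 0 with hSb1
  set Sv1 := ∑ i ∈ Finset.Ico (j+1) k, if V i then 2^(k-1-i) else 0 with hSv1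
  set P := 2^(k-j-1) with hP
  have hPpos : 0 < P := Nat.pow_pos (by norm_num)
  have hQ : (0:ℕ) < 2^j := Nat.pow_pos (by norm_num)
  -- decompositions
  have hdb := decode_split k j (by omega) b
  have hdv := decode_split k j (by omega) v
  have hdb1 := decode_split k (j+1) (by omega) b
  have hdv1 := decode_split k (j+1) (by omega) v
  -- split off the j-th bit from the Ico sums and range sums
  have hsplitB : (∑ i ∈ Finset.Ico j k, if B i then 2^(k-1-i) else 0)
      = (if B j then P else 0) + Sb1 := by
    rw [Finset.sum_eq_sum_Ico_succ_bot (by omega : j < k)]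
    congr 1
    have hPe : (2:ℕ)^(k-1-j) = P := by rw [hP]; congr 1; omega
    split <;> simp [hPe]
  have hsplitV : (∑ i ∈ Finset.Ico j k, if V i then 2^(k-1-i) else 0)
      = (if V j then P else 0) + Sv1 := by
    rw [Finset.sum_eq_sum_Ico_succ_bot (by omega : j < k)]
    congr 1
    have hPe : (2:ℕ)^(k-1-j) = P := by rw [hP]; congr 1; omega
    split <;> simp [hPe]
  have hNB : (∑ i ∈ Finset.range (j+1), if B i then 2^i else 0)
      = A + (if B j then 2^j else 0) := Finset.sum_range_succ _ j
  have hNV : (∑ i ∈ Finset.range (j+1), if V i then 2^i else 0)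
      = A' + (if V j then 2^j else 0) := Finset.sum_range_succ _ j
  -- bounds on suffix sums
  have hIcoBound : ∀ (C : ℕ → Bool) (m : ℕ), m ≤ k →
      (∑ i ∈ Finset.Ico m k, if C i then 2^(k-1-i) else 0) < 2^(k-m) := by
    intro C m hm
    rw [Finset.sum_Ico_eq_sum_range]
    have h1 : ∀ i ∈ Finset.range (k-m),
        (if C (m+i) then 2^(k-1-(m+i)) else 0)
        = (if C (m+i) then 2^((k-m)-1-i) else 0) := by
      intro i hi
      simp only [Finset.mem_range] at hi
      have he : k-1-(m+i) = (k-m)-1-i := by omega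
      rw [he]
    rw [Finset.sum_congr rfl h1]
    exact sum_pow_lt' (fun i => C (m+i)) (k-m)
  have hSb1lt : Sb1 < P := by
    have h := hIcoBound B (j+1) (by omega)
    rw [show k - (j+1) = k - j - 1 from by omega] at h
    exact h
  have hSv1lt : Sv1 < P := by
    have h := hIcoBound V (j+1) (by omega)
    rw [show k - (j+1) = k - j - 1 from by omega] at h
    exact h
  -- rewrite exponents: 2^(k-j) = 2*P, 2^(k-(j+1)) = P
  have hkj : (2:ℕ)^(k-j) = 2*P := by
    rw [hP, ← pow_succ']
    congr 1
    omega
  have hkj1 : (2:ℕ)^(k-(j+1)) = P := by rw [hP, show k-(j+1) = k-j-1 from by omega]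
  rw [hdb, hdv, hsplitB, hsplitV, hkj] at hlt
  rw [show (∑ i ∈ Finset.range j, if extBit k b i = true then 2^i else 0) = A from rfl,
      show (∑ i ∈ Finset.range j, if extBit k v i = true then 2^i else 0) = A' from rfl] at hlt
  rw [hdb1, hdv1, hNB, hNV, hkj1] at hgt
  rw [show (∑ i ∈ Finset.Ico (j+1) k, if extBit k b i then 2^(k-1-i) else 0) = Sb1 from rfl,
      show (∑ i ∈ Finset.Ico (j+1) k, if extBit k v i then 2^(k-1-i) else 0) = Sv1 from rfl] at hgt
  -- hlt : 2*P*A + ((if B j then P else 0) + Sb1) < 2*P*A' + ((if V j then P else 0) + Sv1)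
  -- hgt : P*(A' + bitV) + Sv1 < P*(A + bitB) + Sb1
  have key : B j = true ∧ V j = false ∧ A < A' := by
    rcases hBj : B j <;> rcases hVj : V j <;> rw [hBj, hVj] at hlt hgt <;>
      simp only [show (false = true) = False by simp, show (true = true) = True by simp,
        if_true, if_false, add_zero, zero_add] at hlt hgt
    · -- B j = false, V j = false
      exfalso
      rw [mul_assoc, mul_assoc] at hlt
      have h1 : P*A' < P*(A+1) := by rw [Nat.mul_add, Nat.mul_one]; omega
      have h2 : A' ≤ A := by have := Nat.lt_of_mul_lt_mul_left h1; omega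
      have h3 : P*A < P*(A'+1) := by rw [Nat.mul_add, Nat.mul_one]; omega
      have h4 : A ≤ A' := by have := Nat.lt_of_mul_lt_mul_left h3; omega
      have h5 : A = A' := le_antisymm h4 h2
      rw [h5] at hlt hgt
      omega
    · -- B j = false, V j = true
      exfalso
      rw [mul_assoc, mul_assoc] at hlt
      rw [Nat.mul_add] at hgt
      have h3 : P*A < P*(A'+1) := by rw [Nat.mul_add, Nat.mul_one]; omega
      have h4 : A ≤ A' := by have := Nat.lt_of_mul_lt_mul_left h3; omega
      have h1 : P*(A' + 2^j) < P*(A+1) := by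
        rw [Nat.mul_add, Nat.mul_add, Nat.mul_one]; omega
      have h2 : A' + 2^j ≤ A := by have := Nat.lt_of_mul_lt_mul_left h1; omega
      omega
    · -- B j = true, V j = false : the good case, show A < A'
      refine ⟨rfl, rfl, ?_⟩
      rw [mul_assoc, mul_assoc] at hlt
      by_contra hc
      push_neg at hc
      rw [Nat.mul_add] at hgt
      have h3 : P*A < P*(A'+1) := by rw [Nat.mul_add, Nat.mul_one]; omega
      have h4 : A ≤ A' := by have := Nat.lt_of_mul_lt_mul_left h3; omega
      have h5 : A = A' := le_antisymm h4 hc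
      rw [h5] at hlt
      omega
    · -- B j = true, V j = true
      exfalso
      rw [mul_assoc, mul_assoc] at hlt
      rw [Nat.mul_add, Nat.mul_add] at hgt
      have h1 : P*A' < P*(A+1) := by rw [Nat.mul_add, Nat.mul_one]; omega
      have h2 : A' ≤ A := by have := Nat.lt_of_mul_lt_mul_left h1; omega
      have h3 : P*A < P*(A'+1) := by rw [Nat.mul_add, Nat.mul_one]; omega
      have h4 : A ≤ A' := by have := Nat.lt_of_mul_lt_mul_left h3; omega
      have h5 : A = A' := le_antisymm h4 h2
      rw [h5] at hlt hgt
      omega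
  obtain ⟨hBj, hVj, hAA⟩ := key
  have hb : b ⟨j, by omega⟩ = true := by
    have : B j = b ⟨j, by omega⟩ := by simp [hB, extBit, show j < k by omega]
    rw [← this]; exact hBj
  have hv : v ⟨j, by omega⟩ = false := by
    have : V j = v ⟨j, by omega⟩ := by simp [hV, extBit, show j < k by omega]
    rw [← this]; exact hVj
  refine ⟨hb, hv, ?_⟩
  obtain ⟨i, hij, hfi, hgi, hall⟩ := diffBit B V j hAA
  refine ⟨i, hij, ?_, ?_, ?_⟩
  · have : B i = b ⟨i, by omega⟩ := by simp [hB, extBit, show i < k by omega]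
    rw [← this]; exact hfi
  · have : V i = v ⟨i, by omega⟩ := by simp [hV, extBit, show i < k by omega]
    rw [← this]; exact hgi
  · intro h hh
    have h1 : B h = b ⟨h, by omega⟩ := by simp [hB, extBit, show h < k by omega]
    have h2 : V h = v ⟨h, by omega⟩ := by simp [hV, extBit, show h < k by omega]
    rw [← h1, ← h2]
    exact hall h hh.1 hh.2
end

section
/- For every binary vector b of length k, the sum over all binary vectors v ≠ b of the number of crossing pairs for (b,v) equals γ_k(b) = Σ_{1 ≤ j < i ≤ k} [b_i ≠ b_j] · 2^{k-i+j-1}. -/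
open Finset

/-- `(i,j)` is a crossing pair for `(b,v)`:  `i < j`, the bits `(b_i,v_i),(b_j,v_j)` form
`((0,1),(1,0))` or `((1,0),(0,1))`, and `b` and `v` agree strictly between `i` and `j`. -/
def CrossingPair (k : ℕ) (b v : Fin k → Bool) (p : Fin k × Fin k) : Prop :=
  p.1 < p.2 ∧
    ((b p.1 = false ∧ v p.1 = true ∧ b p.2 = true ∧ v p.2 = false) ∨
      (b p.1 = true ∧ v p.1 = false ∧ b p.2 = false ∧ v p.2 = true)) ∧
    ∀ h : Fin k, p.1 < h → h < p.2 → b h = v h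

instance (k : ℕ) (b v : Fin k → Bool) (p : Fin k × Fin k) : Decidable (CrossingPair k b v p) := by
  unfold CrossingPair; infer_instance

/-- `γ_k(b) = ∑_{j < i} [b_i ≠ b_j] · 2^{k-i+j-1}` (1-based indices; below `p.2` plays the
role of the larger index `i` and `p.1` of `j`, with 0-based exponent `k - 1 - i₀ + j₀`). -/
def gamma (k : ℕ) (b : Fin k → Bool) : ℕ :=
  ∑ p : Fin k × Fin k,
    if p.1 < p.2 ∧ b p.1 ≠ b p.2 then 2 ^ (k - 1 - (p.2 : ℕ) + (p.1 : ℕ)) else 0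

lemma card_fix {k : ℕ} (s : Finset (Fin k)) (g : Fin k → Bool) :
    (Finset.univ.filter (fun v : Fin k → Bool => ∀ a ∈ s, v a = g a)).card = 2 ^ sᶜ.card := by
  rw [← Fintype.card_subtype]
  have e : {v : Fin k → Bool // ∀ a ∈ s, v a = g a} ≃ ((sᶜ : Finset (Fin k)) → Bool) :=
    { toFun := fun v a => v.1 a
      invFun := fun f => ⟨fun a => if h : a ∈ s then g a else f ⟨a, Finset.mem_compl.2 h⟩,
        fun a ha => by simp [ha]⟩
      left_inv := fun v => by
        ext a
        by_cases h : a ∈ s <;> simp [h, v.2 a]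
      right_inv := fun f => by
        ext a
        have := Finset.mem_compl.1 a.2
        simp [this] }
  rw [Fintype.card_congr e]
  simp [Finset.card_compl]

lemma crossing_iff {k : ℕ} (b v : Fin k → Bool) (p : Fin k × Fin k)
    (hlt : p.1 < p.2) (hne : b p.1 ≠ b p.2) :
    CrossingPair k b v p ↔ ∀ a ∈ Finset.Icc p.1 p.2,
      v a = (if a = p.1 then !b p.1 else if a = p.2 then !b p.2 else b a) := by
  constructor
  · rintro ⟨-, hd, hm⟩ a ha
    rw [Finset.mem_Icc] at ha
    rcases eq_or_lt_of_le ha.1 with h1 | h1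
    · subst h1
      rcases hd with ⟨e1, e2, -, -⟩ | ⟨e1, e2, -, -⟩ <;> simp [e1, e2]
    rcases eq_or_lt_of_le ha.2 with h2 | h2
    · subst h2
      have n1 : p.2 ≠ p.1 := ne_of_gt hlt
      rcases hd with ⟨-, -, e1, e2⟩ | ⟨-, -, e1, e2⟩ <;> simp [n1, e1, e2]
    · have n1 : a ≠ p.1 := ne_of_gt h1
      have n2 : a ≠ p.2 := ne_of_lt h2
      simp [n1, n2, (hm a h1 h2).symm]
  · intro h
    have h1 : v p.1 = !b p.1 := by
      have := h p.1 (Finset.mem_Icc.2 ⟨le_refl _, le_of_lt hlt⟩); simpa using this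
    have h2 : v p.2 = !b p.2 := by
      have := h p.2 (Finset.mem_Icc.2 ⟨le_of_lt hlt, le_refl _⟩)
      have n1 : ¬ (p.2 = p.1) := fun hh => absurd hlt (by simp [hh])
      simpa [n1] using this
    refine ⟨hlt, ?_, ?_⟩
    · cases hb1 : b p.1 <;> cases hb2 : b p.2 <;> simp [hb1, hb2] at hne ⊢ <;>
        simp [hb1, hb2] at h1 h2 <;> simp [h1, h2]
    · intro a ha1 ha2
      have := h a (Finset.mem_Icc.2 ⟨le_of_lt ha1, le_of_lt ha2⟩)
      have n1 : ¬ (a = p.1) := fun hh => by subst hh; exact lt_irrefl _ ha1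
      have n2 : ¬ (a = p.2) := fun hh => by subst hh; exact lt_irrefl _ ha2
      rw [if_neg n1, if_neg n2] at this
      exact this.symm

/-- The sum, over all vectors `v ≠ b`, of the number of crossing pairs for `(b,v)`
equals `γ_k(b)`. -/
theorem stmt1 (k : ℕ) (b : Fin k → Bool) :
    ∑ v ∈ Finset.univ.filter (fun v : Fin k → Bool => v ≠ b),
        (Finset.univ.filter (CrossingPair k b v)).card = gamma k b := by
  have hb : (Finset.univ.filter (CrossingPair k b b)).card = 0 := by
    rw [Finset.card_eq_zero, Finset.filter_eq_empty_iff]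
    rintro p - ⟨-, hd, -⟩
    rcases hd with ⟨e1, e2, -, -⟩ | ⟨e1, e2, -, -⟩ <;> rw [e1] at e2 <;> exact Bool.noConfusion e2
  have step1 : ∑ v ∈ Finset.univ.filter (fun v : Fin k → Bool => v ≠ b),
        (Finset.univ.filter (CrossingPair k b v)).card
      = ∑ v : Fin k → Bool, (Finset.univ.filter (CrossingPair k b v)).card := by
    rw [Finset.sum_filter]
    refine Finset.sum_congr rfl fun v _ => ?_
    by_cases h : v = b
    · subst h; simp [hb]
    · simp [h]
  rw [step1]
  have step2 : ∑ v : Fin k → Bool, (Finset.univ.filter (CrossingPair k b v)).card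
      = ∑ p : Fin k × Fin k,
          (Finset.univ.filter (fun v : Fin k → Bool => CrossingPair k b v p)).card := by
    simp only [Finset.card_filter]
    exact Finset.sum_comm
  rw [step2, gamma]
  refine Finset.sum_congr rfl fun p _ => ?_
  by_cases hc : p.1 < p.2 ∧ b p.1 ≠ b p.2
  · rw [if_pos hc]
    obtain ⟨hlt, hne⟩ := hc
    have : (Finset.univ.filter (fun v : Fin k → Bool => CrossingPair k b v p))
        = (Finset.univ.filter (fun v : Fin k → Bool => ∀ a ∈ Finset.Icc p.1 p.2,
            v a = (if a = p.1 then !b p.1 else if a = p.2 then !b p.2 else b a))) := by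
      apply Finset.filter_congr
      intro v _
      exact crossing_iff b v p hlt hne
    rw [this, card_fix]
    congr 1
    rw [Finset.card_compl, Fin.card_Icc]
    simp only [Fintype.card_fin]
    have h1 : (p.1 : ℕ) < (p.2 : ℕ) := hlt
    have h2 : (p.2 : ℕ) < k := p.2.isLt
    omega
  · rw [if_neg hc]
    rw [Finset.card_eq_zero, Finset.filter_eq_empty_iff]
    rintro v - ⟨hlt, hd, -⟩
    apply hc
    refine ⟨hlt, ?_⟩
    rcases hd with ⟨e1, -, e2, -⟩ | ⟨e1, -, e2, -⟩ <;> rw [e1, e2] <;> simp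
end

section
/- Let G be a graph, X, Y ⊆ V(G) disjoint, and X' ⊂ X, Y' ⊂ Y with |X'| = |Y'| = μ_G(X',Y') < μ_G(X,Y). Then there exist vertices x ∈ X \ X' and y ∈ Y \ Y' such that there is a family of μ_G(X',Y') + 1 pairwise vertex-disjoint paths connecting X' ∪ {x} to Y' ∪ {y}. -/
open SimpleGraph

variable {V : Type}

/-- There are `n` pairwise vertex-disjoint `(X,Y)`-paths in `G`. -/
def DisjointPathFamily (G : SimpleGraph V) (X Y : Set V) (n : ℕ) : Prop :=
  ∃ (s t : Fin n → V) (P : ∀ i, G.Walk (s i) (t i)),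
    (∀ i, s i ∈ X) ∧ (∀ i, t i ∈ Y) ∧ (∀ i, (P i).IsPath) ∧
      ∀ i j, i ≠ j → ∀ x, x ∈ (P i).support → x ∉ (P j).support

/-- `μ_G(X,Y)`: the maximum number of pairwise vertex-disjoint `(X,Y)`-paths. -/
noncomputable def mu (G : SimpleGraph V) (X Y : Set V) : ℕ :=
  sSup {n | DisjointPathFamily G X Y n}

namespace AugAux
open Classical

lemma dpf_zero (G : SimpleGraph V) (X Y : Set V) : DisjointPathFamily G X Y 0 :=
  ⟨Fin.elim0, Fin.elim0, fun i => i.elim0, fun i => i.elim0, fun i => i.elim0,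
    fun i => i.elim0, fun i => i.elim0⟩

lemma dpf_mono {G : SimpleGraph V} {X Y : Set V} {m n : ℕ}
    (h : DisjointPathFamily G X Y n) (hmn : m ≤ n) : DisjointPathFamily G X Y m := by
  obtain ⟨s, t, P, hs, ht, hp, hd⟩ := h
  refine ⟨fun i => s (Fin.castLE hmn i), fun i => t (Fin.castLE hmn i),
    fun i => P (Fin.castLE hmn i), fun i => hs _, fun i => ht _, fun i => hp _, ?_⟩
  intro i j hij
  exact hd _ _ (fun hc => hij (Fin.castLE_injective hmn hc))

lemma dpf_start_injective {G : SimpleGraph V} {n : ℕ}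
    {s t : Fin n → V} {P : ∀ i, G.Walk (s i) (t i)}
    (hd : ∀ i j, i ≠ j → ∀ x, x ∈ (P i).support → x ∉ (P j).support) :
    Function.Injective s := by
  intro i j hij
  by_contra hne
  refine hd i j hne (s i) (Walk.start_mem_support _) ?_
  rw [hij]; exact Walk.start_mem_support (P j)

lemma dpf_le_card [Fintype V] {G : SimpleGraph V} {X Y : Set V} {n : ℕ}
    (h : DisjointPathFamily G X Y n) : n ≤ Fintype.card V := by
  obtain ⟨s, t, P, hs, ht, hp, hd⟩ := h
  simpa using Fintype.card_le_of_injective s (dpf_start_injective (P := P) hd)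

lemma dpf_bddAbove [Fintype V] (G : SimpleGraph V) (X Y : Set V) :
    BddAbove {n | DisjointPathFamily G X Y n} :=
  ⟨Fintype.card V, fun _ h => dpf_le_card h⟩

lemma dpf_mu [Fintype V] (G : SimpleGraph V) (X Y : Set V) :
    DisjointPathFamily G X Y (mu G X Y) :=
  Nat.sSup_mem ⟨0, by exact dpf_zero G X Y⟩ (dpf_bddAbove G X Y)

lemma le_mu [Fintype V] {G : SimpleGraph V} {X Y : Set V} {n : ℕ}
    (h : DisjointPathFamily G X Y n) : n ≤ mu G X Y :=
  le_csSup (dpf_bddAbove G X Y) (by exact h)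


variable {G : SimpleGraph V}


lemma exists_first_dart {u v : V} (w : G.Walk u v) (h : u ≠ v) :
    ∃ d ∈ w.darts, d.fst = u := by
  cases w with
  | nil => exact absurd rfl h
  | cons h' p => exact ⟨_, List.mem_cons_self, rfl⟩

lemma in_dart_of_mem_tail {u v x : V} (w : G.Walk u v) (hx : x ∈ w.support.tail) :
    ∃ d ∈ w.darts, d.snd = x := by
  induction w with
  | nil => simp at hx
  | @cons a b c h p ih =>
    rw [Walk.support_cons, List.tail_cons] at hx
    rw [Walk.support_eq_cons p] at hx
    rcases List.mem_cons.mp hx with hx | hx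
    · exact ⟨_, List.mem_cons_self, hx.symm⟩
    · obtain ⟨d, hd, hds⟩ := ih hx
      exact ⟨d, by simp [Walk.darts_cons, hd], hds⟩

lemma dart_snd_mem_tail {u v : V} (w : G.Walk u v) {d : G.Dart} (hd : d ∈ w.darts) :
    d.snd ∈ w.support.tail := by
  induction w with
  | nil => simp at hd
  | @cons a b c h p ih =>
    rw [Walk.darts_cons] at hd
    rw [Walk.support_cons, List.tail_cons]
    rcases List.mem_cons.mp hd with hd | hd
    · subst hd; exact Walk.start_mem_support p
    · exact List.mem_of_mem_tail (ih hd)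

lemma dart_fst_mem_dropLast {u v : V} (w : G.Walk u v) {d : G.Dart} (hd : d ∈ w.darts) :
    d.fst ∈ w.support.dropLast := by
  induction w with
  | nil => simp at hd
  | @cons a b c h p ih =>
    rw [Walk.darts_cons] at hd
    rw [Walk.support_cons, List.dropLast_cons_of_ne_nil (by simp [Walk.support_ne_nil])]
    rcases List.mem_cons.mp hd with hd | hd
    · subst hd; exact List.mem_cons_self
    · exact List.mem_cons_of_mem _ (ih hd)

lemma out_dart_of_mem_dropLast {u v x : V} (w : G.Walk u v)
    (hx : x ∈ w.support.dropLast) : ∃ d ∈ w.darts, d.fst = x := by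
  induction w with
  | nil => simp at hx
  | @cons a b c h p ih =>
    rw [Walk.support_cons, List.dropLast_cons_of_ne_nil (by simp [Walk.support_ne_nil])] at hx
    rcases List.mem_cons.mp hx with hx | hx
    · exact ⟨_, List.mem_cons_self, hx.symm⟩
    · obtain ⟨d, hd, hds⟩ := ih hx
      exact ⟨d, by simp [Walk.darts_cons, hd], hds⟩

lemma dart_index {u v : V} (w : G.Walk u v) (hnd : w.support.Nodup) {d : G.Dart}
    (hd : d ∈ w.darts) :
    w.support.idxOf d.snd = w.support.idxOf d.fst + 1 := by
  induction w with
  | nil => simp at hd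
  | @cons a b c h p ih =>
    rw [Walk.support_cons] at hnd ⊢
    rw [Walk.darts_cons] at hd
    obtain ⟨ha, hnd'⟩ := List.nodup_cons.mp hnd
    rcases List.mem_cons.mp hd with hd | hd
    · subst hd
      have hb : b ∈ p.support := Walk.start_mem_support p
      have hba : (b:V) ≠ a := fun hc => ha (hc ▸ hb)
      show List.idxOf b (a :: p.support) = List.idxOf a (a :: p.support) + 1
      rw [List.idxOf_cons_self, List.idxOf_cons_ne _ hba.symm]
      rw [Walk.support_eq_cons p, List.idxOf_cons_self]
    · have h1 : d.fst ∈ p.support := Walk.dart_fst_mem_support_of_mem_darts p hd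
      have h2 : d.snd ∈ p.support := Walk.dart_snd_mem_support_of_mem_darts p hd
      have hf : d.fst ≠ a := fun hc => ha (hc ▸ h1)
      have hs : d.snd ≠ a := fun hc => ha (hc ▸ h2)
      rw [List.idxOf_cons_ne _ hs.symm, List.idxOf_cons_ne _ hf.symm, ih hnd' hd]

lemma in_dart_unique {u v : V} (w : G.Walk u v) (hnd : w.support.Nodup)
    {d d' : G.Dart} (hd : d ∈ w.darts) (hd' : d' ∈ w.darts) (h : d.snd = d'.snd) :
    d.fst = d'.fst := by
  have h1 := dart_index w hnd hd
  have h2 := dart_index w hnd hd'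
  rw [h, h2] at h1
  exact ((List.idxOf_inj (Walk.dart_fst_mem_support_of_mem_darts w hd')).mp (Nat.succ_injective h1)).symm

lemma out_dart_unique {u v : V} (w : G.Walk u v) (hnd : w.support.Nodup)
    {d d' : G.Dart} (hd : d ∈ w.darts) (hd' : d' ∈ w.darts) (h : d.fst = d'.fst) :
    d.snd = d'.snd := by
  have h1 := dart_index w hnd hd
  have h2 := dart_index w hnd hd'
  rw [h, ← h2] at h1
  exact (List.idxOf_inj (Walk.dart_snd_mem_support_of_mem_darts w hd)).mp h1

lemma start_no_in_dart {u v : V} (w : G.Walk u v) (hnd : w.support.Nodup)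
    {d : G.Dart} (hd : d ∈ w.darts) : d.snd ≠ u := by
  intro hc
  have := dart_snd_mem_tail w hd
  rw [hc, Walk.support_eq_cons w] at this
  exact (List.nodup_cons.mp (Walk.support_eq_cons w ▸ hnd)).1 this

lemma end_no_out_dart {u v : V} (w : G.Walk u v) (hnd : w.support.Nodup)
    {d : G.Dart} (hd : d ∈ w.darts) : d.fst ≠ v := by
  induction w with
  | nil => simp at hd
  | @cons a b c h p ih =>
    rw [Walk.darts_cons] at hd
    rw [Walk.support_cons] at hnd
    obtain ⟨ha, hnd'⟩ := List.nodup_cons.mp hnd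
    rcases List.mem_cons.mp hd with hd | hd
    · subst hd
      intro hc
      exact ha (hc ▸ Walk.end_mem_support p)
    · exact ih hnd' hd


/-- partial successor function machinery -/
def IsSrc (f : V → Option V) (v : V) : Prop := (f v).isSome ∧ ∀ u, f u ≠ some v

def itf (f : V → Option V) : ℕ → V → Option V
  | 0, v => some v
  | n+1, v => (itf f n v).bind f

@[simp] lemma itf_zero (f : V → Option V) (v : V) : itf f 0 v = some v := rfl

lemma itf_succ (f : V → Option V) (n : ℕ) (v : V) :
    itf f (n+1) v = (itf f n v).bind f := rfl

lemma itf_add (f : V → Option V) (a b : ℕ) (u : V) :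
    itf f (a+b) u = (itf f a u).bind (itf f b) := by
  induction b with
  | zero => cases h : itf f a u <;> simp [h]
  | succ b ih =>
    rw [show a + (b+1) = (a+b)+1 from rfl, itf_succ, ih]
    cases h : itf f a u <;> simp [itf_succ, h]

lemma itf_succ' (f : V → Option V) (n : ℕ) (v : V) :
    itf f (n+1) v = (f v).bind (itf f n) := by
  have := itf_add f 1 n v
  rw [Nat.add_comm 1 n] at this
  exact this

lemma itf_pred {f : V → Option V} {n : ℕ} {u w : V} (h : itf f (n+1) u = some w) :
    ∃ p, itf f n u = some p ∧ f p = some w := by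
  rw [itf_succ] at h
  cases hp : itf f n u with
  | none => rw [hp] at h; simp at h
  | some p => rw [hp] at h; exact ⟨p, rfl, h⟩

lemma itf_step {f : V → Option V} {n : ℕ} {u v w : V} (huv : f u = some v)
    (h : itf f n v = some w) : itf f (n+1) u = some w := by
  rw [itf_succ', huv]; exact h

/-- no cycle through a vertex reachable from a source -/
lemma no_cycle_src {f : V → Option V} (hinj : ∀ u u' v, f u = some v → f u' = some v → u = u')
    {s : V} (hs : IsSrc f s) :
    ∀ a u, itf f a s = some u → ∀ j, 1 ≤ j → itf f j u ≠ some u := by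
  intro a
  induction a with
  | zero =>
    intro u hu j hj hc
    have hsu : s = u := by simpa using hu
    subst hsu
    obtain ⟨j', rfl⟩ := Nat.exists_eq_add_of_le hj
    have hc' : itf f (j'+1) s = some s := by rw [Nat.add_comm 1 j'] at hc; exact hc
    obtain ⟨p, hp1, hp⟩ := itf_pred hc'
    exact hs.2 p hp
  | succ a ih =>
    intro u hu j hj hc
    obtain ⟨p, hpa, hp⟩ := itf_pred hu
    obtain ⟨j', rfl⟩ := Nat.exists_eq_add_of_le hj
    have hc' : itf f (j'+1) u = some u := by rw [Nat.add_comm 1 j'] at hc; exact hc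
    obtain ⟨q, hq, hqu⟩ := itf_pred hc' 
    have hqp : q = p := hinj q p u hqu hp
    rw [hqp] at hq
    exact ih p hpa (j'+1) (Nat.le_add_left _ _) (itf_step hp hq)

lemma chain_distinct {f : V → Option V}
    (hinj : ∀ u u' v, f u = some v → f u' = some v → u = u')
    {s : V} (hs : IsSrc f s) {a b : ℕ} {u : V}
    (ha : itf f a s = some u) (hb : itf f b s = some u) : a = b := by
  rcases Nat.lt_trichotomy a b with h | h | h
  · exfalso
    obtain ⟨c, rfl⟩ := Nat.exists_eq_add_of_lt h
    rw [show a + c + 1 = a + (c+1) from rfl, itf_add, ha] at hb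
    exact no_cycle_src hinj hs a u ha (c+1) (Nat.le_add_left _ _) (by simpa using hb)
  · exact h
  · exfalso
    obtain ⟨c, rfl⟩ := Nat.exists_eq_add_of_lt h
    rw [show b + c + 1 = b + (c+1) from rfl, itf_add, hb] at ha
    exact no_cycle_src hinj hs b u hb (c+1) (Nat.le_add_left _ _) (by simpa using ha)

def chainSet (f : V → Option V) (u : V) : Set V := {v | ∃ n, itf f n u = some v}

lemma mem_chainSet_self (f : V → Option V) (u : V) : u ∈ chainSet f u := ⟨0, rfl⟩

lemma chainSet_step_subset {f : V → Option V} {u v : V} (huv : f u = some v) :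
    chainSet f v ⊆ chainSet f u := by
  rintro w ⟨n, hn⟩
  exact ⟨n+1, itf_step huv hn⟩

lemma chainSet_step_not_mem {f : V → Option V}
    (hinj : ∀ u u' v, f u = some v → f u' = some v → u = u')
    {s : V} (hs : IsSrc f s) {a : ℕ} {u v : V} (ha : itf f a s = some u)
    (huv : f u = some v) : u ∉ chainSet f v := by
  rintro ⟨n, hn⟩
  exact no_cycle_src hinj hs a u ha (n+1) (Nat.le_add_left _ _) (itf_step huv hn)

lemma chainSet_ncard_lt [Fintype V] {f : V → Option V}
    (hinj : ∀ u u' v, f u = some v → f u' = some v → u = u')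
    {s : V} (hs : IsSrc f s) {a : ℕ} {u v : V} (ha : itf f a s = some u)
    (huv : f u = some v) : (chainSet f v).ncard < (chainSet f u).ncard := by
  apply Set.ncard_lt_ncard
  · exact ⟨chainSet_step_subset huv, fun hsub =>
      chainSet_step_not_mem hinj hs ha huv (hsub (mem_chainSet_self f u))⟩
  · exact Set.toFinite _

lemma chainSet_meet {f : V → Option V}
    (hinj : ∀ u u' v, f u = some v → f u' = some v → u = u')
    {s s' : V} (hs : IsSrc f s) (hs' : IsSrc f s') :
    ∀ a b w, itf f a s = some w → itf f b s' = some w → s = s' := by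
  intro a
  induction a with
  | zero =>
    intro b w ha hb
    have hsw : s = w := by simpa using ha
    subst hsw
    cases b with
    | zero => simpa using hb.symm
    | succ b =>
      obtain ⟨p, hp1, hp⟩ := itf_pred hb
      exact absurd hp (hs.2 p)
  | succ a ih =>
    intro b w ha hb
    obtain ⟨p, hpa, hp⟩ := itf_pred ha
    cases b with
    | zero =>
      have hsw : s' = w := by simpa using hb
      subst hsw
      exact absurd hp (hs'.2 p)
    | succ b =>
      obtain ⟨q, hqb, hq⟩ := itf_pred hb
      have hqp : q = p := hinj q p w hq hp
      rw [hqp] at hqb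
      exact ih b p hpa hqb

/-- building a walk by following `f` -/
noncomputable def fwalk (G : SimpleGraph V) (f : V → Option V)
    (hadj : ∀ u v, f u = some v → G.Adj u v) : ℕ → (u : V) → Σ' w : V, G.Walk u w
  | 0, u => ⟨u, Walk.nil⟩
  | (n+1), u =>
    if h : ∃ v, f u = some v then
      ⟨(fwalk G f hadj n h.choose).1,
        Walk.cons (hadj _ _ h.choose_spec) (fwalk G f hadj n h.choose).2⟩
    else ⟨u, Walk.nil⟩

lemma fwalk_support {f : V → Option V} (hadj : ∀ u v, f u = some v → G.Adj u v) :
    ∀ (n : ℕ) (u : V), ∀ x ∈ (fwalk G f hadj n u).2.support, x ∈ chainSet f u := by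
  intro n
  induction n with
  | zero => intro u x hx; simp [fwalk] at hx; simp [hx, mem_chainSet_self]
  | succ n ih =>
    intro u x hx
    by_cases h : ∃ v, f u = some v
    · rw [fwalk, dif_pos h] at hx
      rw [Walk.support_cons] at hx
      rcases List.mem_cons.mp hx with hx | hx
      · simp [hx, mem_chainSet_self]
      · exact chainSet_step_subset h.choose_spec (ih _ x hx)
    · rw [fwalk, dif_neg h] at hx
      simp at hx; simp [hx, mem_chainSet_self]

lemma fwalk_end_none [Fintype V] {f : V → Option V}
    (hadj : ∀ u v, f u = some v → G.Adj u v)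
    (hinj : ∀ u u' v, f u = some v → f u' = some v → u = u')
    {s : V} (hs : IsSrc f s) :
    ∀ (n : ℕ) (u : V), (∃ a, itf f a s = some u) → (chainSet f u).ncard ≤ n + 1 →
      f (fwalk G f hadj n u).1 = none := by
  intro n
  induction n with
  | zero =>
    rintro u ⟨a, ha⟩ hcard
    show f ((⟨u, Walk.nil⟩ : Σ' w : V, G.Walk u w)).1 = none
    cases hf : f u with
    | none => rfl
    | some v =>
      exfalso
      have hvu : v ≠ u := fun hc =>
        no_cycle_src hinj hs a u ha 1 le_rfl
          (show itf f 1 u = some u from by rw [show itf f 1 u = f u from rfl, hf, hc])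
      have hsub : {u, v} ⊆ chainSet f u := by
        rintro x (rfl | rfl)
        · exact mem_chainSet_self f _
        · exact ⟨1, hf⟩
      have : ({u, v} : Set V).ncard ≤ 1 :=
        le_trans (Set.ncard_le_ncard hsub (Set.toFinite _)) hcard
      rw [Set.ncard_pair (Ne.symm hvu)] at this
      omega
  | succ n ih =>
    rintro u ⟨a, ha⟩ hcard
    by_cases h : ∃ v, f u = some v
    · rw [fwalk, dif_pos h]
      show f (fwalk G f hadj n h.choose).1 = none
      apply ih
      · exact ⟨a+1, by rw [itf_succ, ha]; exact h.choose_spec⟩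
      · have := chainSet_ncard_lt hinj hs ha h.choose_spec
        omega
    · rw [fwalk, dif_neg h]
      show f u = none
      cases hf : f u with
      | none => rfl
      | some v => exact absurd ⟨v, hf⟩ h


lemma fwalk_isPath [Fintype V] {f : V → Option V}
    (hadj : ∀ u v, f u = some v → G.Adj u v)
    (hinj : ∀ u u' v, f u = some v → f u' = some v → u = u')
    {s : V} (hs : IsSrc f s) :
    ∀ (n : ℕ) (u : V), (∃ a, itf f a s = some u) → (fwalk G f hadj n u).2.IsPath := by
  intro n
  induction n with
  | zero => intro u _; exact Walk.IsPath.nil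
  | succ n ih =>
    rintro u ⟨a, ha⟩
    by_cases h : ∃ v, f u = some v
    · rw [fwalk, dif_pos h]
      rw [Walk.cons_isPath_iff]
      refine ⟨ih _ ⟨a+1, by rw [itf_succ, ha]; exact h.choose_spec⟩, ?_⟩
      intro hmem
      exact chainSet_step_not_mem hinj hs ha h.choose_spec
        (fwalk_support hadj n _ u hmem)
    · rw [fwalk, dif_neg h]
      exact Walk.IsPath.nil

lemma fwalk_end_mem {f : V → Option V} (hadj : ∀ u v, f u = some v → G.Adj u v)
    (n : ℕ) (u : V) : (fwalk G f hadj n u).1 ∈ chainSet f u :=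
  fwalk_support hadj n u _ (Walk.end_mem_support _)

/-- main lemma: a suitable partial successor function yields a disjoint path family -/
lemma fam_of_fun [Fintype V] {G : SimpleGraph V} {A B : Set V} {n : ℕ}
    (f : V → Option V)
    (hadj : ∀ u v, f u = some v → G.Adj u v)
    (hinj : ∀ u u' v, f u = some v → f u' = some v → u = u')
    (src : Fin n → V) (hsrcinj : Function.Injective src)
    (hsrc : ∀ i, IsSrc f (src i)) (hsrcA : ∀ i, src i ∈ A)
    (hsnk : ∀ v, (∃ u, f u = some v) → f v = none → v ∈ B) :
    DisjointPathFamily G A B n := by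
  set F := Fintype.card V with hF
  refine ⟨src, fun i => (fwalk G f hadj F (src i)).1, fun i => (fwalk G f hadj F (src i)).2,
    hsrcA, ?_, ?_, ?_⟩
  · -- ends in B
    intro i
    have hcard : (chainSet f (src i)).ncard ≤ F + 1 := by
      have : (chainSet f (src i)).ncard ≤ F := by
        have h1 : (chainSet f (src i)).ncard ≤ (Set.univ : Set V).ncard :=
          Set.ncard_le_ncard (Set.subset_univ _) (Set.toFinite _)
        rwa [Set.ncard_univ, Nat.card_eq_fintype_card] at h1
      omega
    have hend := fwalk_end_none hadj hinj (hsrc i) F (src i) ⟨0, rfl⟩ hcard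
    obtain ⟨m, hm⟩ := fwalk_end_mem hadj F (src i)
    have hm1 : m ≠ 0 := by
      intro hc; subst hc
      have : src i = (fwalk G f hadj F (src i)).1 := by simpa using hm
      have h2 := (hsrc i).1
      rw [this, hend] at h2
      simp at h2
    obtain ⟨m', rfl⟩ : ∃ m', m = m' + 1 := ⟨m - 1, by omega⟩
    obtain ⟨p, _, hp⟩ := itf_pred hm
    exact hsnk _ ⟨p, hp⟩ hend
  · intro i
    exact fwalk_isPath hadj hinj (hsrc i) F (src i) ⟨0, rfl⟩
  · intro i j hij x hxi hxj
    have h1 := fwalk_support hadj F (src i) x hxi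
    have h2 := fwalk_support hadj F (src j) x hxj
    obtain ⟨a, ha⟩ := h1
    obtain ⟨b, hb⟩ := h2
    exact hij (hsrcinj (chainSet_meet hinj (hsrc i) (hsrc j) a b x ha hb))


lemma exists_last_dart {u v : V} (w : G.Walk u v) (h : u ≠ v) :
    ∃ d ∈ w.darts, d.snd = v := by
  obtain ⟨d, hd, hdf⟩ := exists_first_dart w.reverse (Ne.symm h)
  rw [Walk.darts_reverse] at hd
  obtain ⟨e, he, rfl⟩ := List.mem_map.mp (List.mem_reverse.mp hd)
  exact ⟨e, he, hdf⟩

lemma mem_support_cases {u v x : V} (w : G.Walk u v) (hx : x ∈ w.support) :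
    x = v ∨ x ∈ w.support.dropLast := by
  induction w with
  | nil => left; simpa using hx
  | @cons a b c h p ih =>
    rw [Walk.support_cons] at hx
    rw [Walk.support_cons, List.dropLast_cons_of_ne_nil (by simp [Walk.support_ne_nil])]
    rcases List.mem_cons.mp hx with hx | hx
    · right; exact hx ▸ List.mem_cons_self
    · rcases ih hx with hx | hx
      · left; exact hx
      · right; exact List.mem_cons_of_mem _ hx

/-- encode a disjoint path family into a partial successor function -/
lemma enc_of_fam {G : SimpleGraph V} {A B : Set V} {n : ℕ}
    (hAB : Disjoint A B) (fam : DisjointPathFamily G A B n) :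
    ∃ (f : V → Option V) (s t : Fin n → V) (ρ : V → ℕ),
      (∀ u v, f u = some v → G.Adj u v) ∧
      (∀ u u' v, f u = some v → f u' = some v → u = u') ∧
      (∀ u v, f u = some v → ρ v = ρ u + 1) ∧
      (∀ i, s i ∈ A) ∧ (∀ i, t i ∈ B) ∧
      Function.Injective s ∧ Function.Injective t ∧
      (∀ i, (f (s i)).isSome) ∧ (∀ i u, f u ≠ some (s i)) ∧
      (∀ i, f (t i) = none) ∧ (∀ i, ∃ u, f u = some (t i)) ∧
      (∀ v, (f v).isSome → (∀ u, f u ≠ some v) → ∃ i, v = s i) ∧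
      (∀ v, (∃ u, f u = some v) → f v = none → ∃ i, v = t i) := by
  classical
  obtain ⟨s, t, P, hs, ht, hp, hd⟩ := fam
  -- paths are nontrivial
  have hst : ∀ i, s i ≠ t i := fun i hc =>
    Set.disjoint_left.mp hAB (hs i) (hc ▸ ht i)
  have uniquePath : ∀ {x : V} {i j : Fin n}, x ∈ (P i).support → x ∈ (P j).support → i = j := by
    intro x i j hi hj
    by_contra hne
    exact hd i j hne x hi hj
  set Dq : V → V → Prop := fun u v => ∃ i, ∃ d ∈ (P i).darts, d.fst = u ∧ d.snd = v with hDq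
  have Dq_out_unique : ∀ {u v v'}, Dq u v → Dq u v' → v = v' := by
    rintro u v v' ⟨i, d, hdi, rfl, rfl⟩ ⟨j, e, hej, hef, rfl⟩
    have hij : i = j := uniquePath (Walk.dart_fst_mem_support_of_mem_darts _ hdi)
      (hef ▸ Walk.dart_fst_mem_support_of_mem_darts _ hej)
    subst hij
    exact out_dart_unique (P i) (hp i).support_nodup hdi hej hef.symm
  have Dq_in_unique : ∀ {u u' v}, Dq u v → Dq u' v → u = u' := by
    rintro u u' v ⟨i, d, hdi, rfl, rfl⟩ ⟨j, e, hej, rfl, hes⟩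
    have hij : i = j := uniquePath (Walk.dart_snd_mem_support_of_mem_darts _ hdi)
      (hes ▸ Walk.dart_snd_mem_support_of_mem_darts _ hej)
    subst hij
    exact in_dart_unique (P i) (hp i).support_nodup hdi hej hes.symm
  set f : V → Option V := fun u => if h : ∃ v, Dq u v then some h.choose else none with hf
  have f_iff : ∀ {u v}, f u = some v ↔ Dq u v := by
    intro u v
    constructor
    · intro h
      simp only [hf] at h
      split at h
      · next hex => exact (Option.some_inj.mp h) ▸ hex.choose_spec
      · simp at h
    · intro h
      have hex : ∃ v, Dq u v := ⟨v, h⟩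
      simp only [hf]
      rw [dif_pos hex]
      exact congrArg some (Dq_out_unique hex.choose_spec h)
  set ρ : V → ℕ := fun v => if h : ∃ i, v ∈ (P i).support
    then (P h.choose).support.idxOf v else 0 with hρ
  refine ⟨f, s, t, ρ, ?_, ?_, ?_, hs, ht, ?_, ?_, ?_, ?_, ?_, ?_, ?_, ?_⟩
  · -- adjacency
    rintro u v h
    obtain ⟨i, d, hdi, rfl, rfl⟩ := f_iff.mp h
    exact d.adj
  · -- in-injectivity
    intro u u' v h h'
    exact Dq_in_unique (f_iff.mp h) (f_iff.mp h')
  · -- rank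
    intro u v h
    obtain ⟨i, d, hdi, rfl, rfl⟩ := f_iff.mp h
    have hu : d.fst ∈ (P i).support := Walk.dart_fst_mem_support_of_mem_darts _ hdi
    have hv : d.snd ∈ (P i).support := Walk.dart_snd_mem_support_of_mem_darts _ hdi
    have hexu : ∃ j, d.fst ∈ (P j).support := ⟨i, hu⟩
    have hexv : ∃ j, d.snd ∈ (P j).support := ⟨i, hv⟩
    simp only [hρ]
    rw [dif_pos hexu, dif_pos hexv]
    have hiu : hexu.choose = i := uniquePath hexu.choose_spec hu
    have hiv : hexv.choose = i := uniquePath hexv.choose_spec hv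
    rw [hiu, hiv]
    exact dart_index (P i) (hp i).support_nodup hdi
  · exact dpf_start_injective hd
  · -- t injective
    intro i j hij
    by_contra hne
    refine hd i j hne (t i) (Walk.end_mem_support _) ?_
    rw [hij]; exact Walk.end_mem_support (P j)
  · -- s i has out-edge
    intro i
    obtain ⟨d, hdi, hdf⟩ := exists_first_dart (P i) (hst i)
    rw [Option.isSome_iff_exists]
    exact ⟨d.snd, f_iff.mpr ⟨i, d, hdi, hdf, rfl⟩⟩
  · -- s i has no in-edge
    intro i u hc
    obtain ⟨j, d, hdj, rfl, hds⟩ := f_iff.mp hc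
    have hj : s i ∈ (P j).support := hds ▸ Walk.dart_snd_mem_support_of_mem_darts _ hdj
    have hij : j = i := uniquePath hj (Walk.start_mem_support _)
    subst hij
    exact start_no_in_dart (P j) (hp j).support_nodup hdj hds
  · -- t i has no out-edge
    intro i
    cases hc : f (t i) with
    | none => rfl
    | some v =>
      exfalso
      obtain ⟨j, d, hdj, hdf, rfl⟩ := f_iff.mp hc
      have hj : t i ∈ (P j).support := hdf ▸ Walk.dart_fst_mem_support_of_mem_darts _ hdj
      have hij : j = i := uniquePath hj (Walk.end_mem_support _)
      subst hij
      exact end_no_out_dart (P j) (hp j).support_nodup hdj hdf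
  · -- t i has in-edge
    intro i
    obtain ⟨d, hdi, hds⟩ := exists_last_dart (P i) (hst i)
    exact ⟨d.fst, f_iff.mpr ⟨i, d, hdi, rfl, hds⟩⟩
  · -- sources are starts
    intro v hout hnoin
    obtain ⟨w, hw⟩ := Option.isSome_iff_exists.mp hout
    obtain ⟨i, d, hdi, rfl, rfl⟩ := f_iff.mp hw
    refine ⟨i, ?_⟩
    have hv : d.fst ∈ (P i).support := Walk.dart_fst_mem_support_of_mem_darts _ hdi
    rw [Walk.support_eq_cons] at hv
    rcases List.mem_cons.mp hv with hv | hv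
    · exact hv
    · exfalso
      obtain ⟨e, hei, hes⟩ := in_dart_of_mem_tail (P i) (by
        rw [Walk.support_eq_cons]; exact hv)
      exact hnoin e.fst (f_iff.mpr ⟨i, e, hei, rfl, hes⟩)
  · -- sinks are ends
    intro v hin hnone
    obtain ⟨u, hu⟩ := hin
    obtain ⟨i, d, hdi, rfl, rfl⟩ := f_iff.mp hu
    refine ⟨i, ?_⟩
    have hv : d.snd ∈ (P i).support := Walk.dart_snd_mem_support_of_mem_darts _ hdi
    rcases mem_support_cases (P i) hv with hv | hv
    · exact hv
    · exfalso
      obtain ⟨e, hei, hef⟩ := out_dart_of_mem_dropLast (P i) hv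
      have : f d.snd = some e.snd := f_iff.mpr ⟨i, e, hei, hef, rfl⟩
      rw [hnone] at this
      simp at this


/-! ### residual reachability -/

def usedV (f : V → Option V) (v : V) : Prop := (f v).isSome ∨ ∃ u, f u = some v

def Rf (G : SimpleGraph V) (f : V → Option V) : V × Bool → V × Bool → Prop := fun a b =>
  (a.2 = true ∧ b.2 = false ∧ G.Adj a.1 b.1 ∧ f a.1 ≠ some b.1) ∨
  (a.2 = false ∧ b.2 = true ∧ f b.1 = some a.1) ∨
  (a.2 = false ∧ b.2 = true ∧ b.1 = a.1 ∧ ¬ usedV f a.1) ∨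
  (a.2 = true ∧ b.2 = false ∧ b.1 = a.1 ∧ usedV f a.1)

def Reach (G : SimpleGraph V) (f : V → Option V) (X X' : Set V) (w : V × Bool) : Prop :=
  ∃ x ∈ X \ X', Relation.ReflTransGen (Rf G f) (x, false) w

variable {f : V → Option V} {X X' Y Y' : Set V}

lemma Reach_tail {w w' : V × Bool} (h : Reach G f X X' w) (hr : Rf G f w w') :
    Reach G f X X' w' := by
  obtain ⟨x, hx, hrtg⟩ := h
  exact ⟨x, hx, hrtg.tail hr⟩

lemma L_e1 {u v : V} (h : Reach G f X X' (u, true)) (hadj : G.Adj u v)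
    (hne : f u ≠ some v) : Reach G f X X' (v, false) :=
  Reach_tail h (Or.inl ⟨rfl, rfl, hadj, hne⟩)

lemma L_b1 {v p : V} (h : Reach G f X X' (v, false)) (hp : f p = some v) :
    Reach G f X X' (p, true) ∧ Reach G f X X' (p, false) := by
  have h1 : Reach G f X X' (p, true) :=
    Reach_tail h (Or.inr (Or.inl ⟨rfl, rfl, hp⟩))
  refine ⟨h1, Reach_tail h1 (Or.inr (Or.inr (Or.inr ⟨rfl, rfl, rfl, ?_⟩)))⟩
  exact Or.inl (by simp [hp])

lemma L_i1 {v : V} (h : Reach G f X X' (v, false)) (hu : ¬ usedV f v) :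
    Reach G f X X' (v, true) :=
  Reach_tail h (Or.inr (Or.inr (Or.inl ⟨rfl, rfl, rfl, hu⟩)))

lemma L_i3 {v : V} (h : Reach G f X X' (v, true)) (hu : usedV f v) :
    Reach G f X X' (v, false) :=
  Reach_tail h (Or.inr (Or.inr (Or.inr ⟨rfl, rfl, rfl, hu⟩)))

/-- if `(u,true)` is reachable and `f u = some v` then `(v,false)` is reachable -/
lemma L_e2 (hinj : ∀ u u' v, f u = some v → f u' = some v → u = u')
    {u v : V} (h : Reach G f X X' (u, true)) (hv : f u = some v) :
    Reach G f X X' (v, false) := by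
  obtain ⟨x, hx, hrtg⟩ := h
  rcases hrtg.cases_tail with heq | ⟨c, hc, hstep⟩
  · exact absurd (congrArg Prod.snd heq) (by simp)
  · obtain ⟨c1, c2⟩ := c
    rcases hstep with ⟨_, h2, _, _⟩ | ⟨hc2, _, hf⟩ | ⟨_, _, hb1, hnu⟩ | ⟨_, h2, _, _⟩
    · simp at h2
    · simp only at hc2 hf
      subst hc2
      have hcv : c1 = v := Option.some_inj.mp (hf.symm.trans hv)
      subst hcv
      exact ⟨x, hx, hc⟩
    · simp only at hb1
      subst hb1
      exact absurd (Or.inl (by simp [hv])) hnu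
    · simp at h2

/-- the separator -/
def SepSet (G : SimpleGraph V) (f : V → Option V) (X X' Y Y' : Set V) : Set V :=
  {v | usedV f v ∧ Reach G f X X' (v, false) ∧ ¬ Reach G f X X' (v, true)} ∪
  {v | v ∈ X' ∧ ¬ Reach G f X X' (v, false)} ∪
  {v | v ∈ Y' ∧ Reach G f X X' (v, true)}

lemma walk_meets (hinj : ∀ u u' v, f u = some v → f u' = some v → u = u')
    (hcase2 : ∀ y ∈ Y \ Y', ¬ Reach G f X X' (y, true)) {u v : V} (w : G.Walk u v)
    (hu : Reach G f X X' (u, false)) (hv : v ∈ Y) :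
    ∃ z ∈ w.support, z ∈ SepSet G f X X' Y Y' := by
  induction w with
  | @nil a =>
    refine ⟨a, Walk.start_mem_support _, ?_⟩
    by_cases hR : Reach G f X X' (a, true)
    · by_cases hY' : a ∈ Y'
      · exact Or.inr ⟨hY', hR⟩
      · exact absurd hR (hcase2 a ⟨hv, hY'⟩)
    · by_cases husd : usedV f a
      · exact Or.inl (Or.inl ⟨husd, hu, hR⟩)
      · exact absurd (L_i1 hu husd) hR
  | @cons a b c hab p ih =>
    by_cases hR : Reach G f X X' (a, true)
    · have hb : Reach G f X X' (b, false) := by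
        by_cases hfab : f a = some b
        · exact L_e2 hinj hR hfab
        · exact L_e1 hR hab hfab
      obtain ⟨z, hz, hzS⟩ := ih hb hv
      exact ⟨z, by rw [Walk.support_cons]; exact List.mem_cons_of_mem _ hz, hzS⟩
    · by_cases husd : usedV f a
      · exact ⟨a, Walk.start_mem_support _, Or.inl (Or.inl ⟨husd, hu, hR⟩)⟩
      · exact absurd (L_i1 hu husd) hR


/-- every used vertex lies on a chain from a source in `X'` -/
lemma chain_src {ρ : V → ℕ} (hrank : ∀ u v, f u = some v → ρ v = ρ u + 1)
    (hsrcX' : ∀ v, (f v).isSome → (∀ u, f u ≠ some v) → v ∈ X') :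
    ∀ (N : ℕ) (v : V), ρ v ≤ N → usedV f v → ∃ x' ∈ X', ∃ a, itf f a x' = some v := by
  intro N
  induction N with
  | zero =>
    intro v hN hused
    by_cases hin : ∃ p, f p = some v
    · obtain ⟨p, hp⟩ := hin
      have := hrank p v hp
      omega
    · push_neg at hin
      have hout : (f v).isSome := by
        rcases hused with h | ⟨p, hp⟩
        · exact h
        · exact absurd hp (hin p)
      exact ⟨v, hsrcX' v hout hin, 0, rfl⟩
  | succ N ih =>
    intro v hN hused
    by_cases hin : ∃ p, f p = some v
    · obtain ⟨p, hp⟩ := hin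
      have hρ := hrank p v hp
      obtain ⟨x', hx', a, ha⟩ := ih p (by omega) (Or.inl (by simp [hp]))
      exact ⟨x', hx', a + 1, by rw [itf_succ, ha]; exact hp⟩
    · push_neg at hin
      have hout : (f v).isSome := by
        rcases hused with h | ⟨p, hp⟩
        · exact h
        · exact absurd hp (hin p)
      exact ⟨v, hsrcX' v hout hin, 0, rfl⟩

/-- reachability of `(v,false)` propagates backwards along chains -/
lemma back_prop (hinj : ∀ u u' v, f u = some v → f u' = some v → u = u') :
    ∀ (j : ℕ) {s s' : V}, itf f j s = some s' → 1 ≤ j →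
      Reach G f X X' (s', false) → Reach G f X X' (s, false) ∧ Reach G f X X' (s, true) := by
  intro j
  induction j with
  | zero => intro s s' _ h; omega
  | succ j ih =>
    intro s s' hit _ hR
    obtain ⟨p, hpj, hp⟩ := itf_pred hit
    have hpr := L_b1 hR hp
    cases j with
    | zero =>
      have : s = p := by simpa using hpj
      subst this
      exact ⟨hpr.2, hpr.1⟩
    | succ j' => exact ih hpj (by omega) hpr.2

/-- In "case 2" the separator has at most `|X'|` elements. -/
lemma sep_ncard_le [Fintype V] {ρ : V → ℕ}
    (hinj : ∀ u u' v, f u = some v → f u' = some v → u = u')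
    (hrank : ∀ u v, f u = some v → ρ v = ρ u + 1)
    (hsrcX' : ∀ v, (f v).isSome → (∀ u, f u ≠ some v) → v ∈ X')
    (hX'out : ∀ x ∈ X', (f x).isSome)
    (hX'noin : ∀ x ∈ X', ∀ u, f u ≠ some x)
    (hY'none : ∀ y ∈ Y', f y = none)
    (hY'in : ∀ y ∈ Y', ∃ u, f u = some y) :
    (SepSet G f X X' Y Y').ncard ≤ X'.ncard := by
  classical
  -- every element of the separator is used
  have hused : ∀ v ∈ SepSet G f X X' Y Y', usedV f v := by
    rintro v ((⟨h, _, _⟩ | ⟨h, _⟩) | ⟨h, _⟩)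
    · exact h
    · exact Or.inl (hX'out v h)
    · exact Or.inr (hY'in v h)
  -- the source map
  have hsrc : ∀ v ∈ SepSet G f X X' Y Y', ∃ x' ∈ X', ∃ a, itf f a x' = some v :=
    fun v hv => chain_src hrank hsrcX' (ρ v) v le_rfl (hused v hv)
  set σ : V → V := fun v => if h : ∃ x' ∈ X', ∃ a, itf f a x' = some v then h.choose else v
    with hσ
  have hσspec : ∀ v ∈ SepSet G f X X' Y Y', σ v ∈ X' ∧ ∃ a, itf f a (σ v) = some v := by
    intro v hv
    have h := hsrc v hv
    simp only [hσ, dif_pos h]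
    exact ⟨h.choose_spec.1, h.choose_spec.2⟩
  -- σ is injective on the separator
  have hkey : ∀ v ∈ SepSet G f X X' Y Y', ∀ w ∈ SepSet G f X X' Y Y',
      ∀ j, 1 ≤ j → itf f j v = some w → False := by
    intro v hv w hw j hj hit
    obtain ⟨j0, rfl⟩ : ∃ j0, j = j0 + 1 := ⟨j - 1, by omega⟩
    have hvout : ∃ z, f v = some z := by
      rcases j0 with _ | j1
      · obtain ⟨p, hp1, hp⟩ := itf_pred hit
        have : v = p := by simpa using hp1
        exact ⟨w, this ▸ hp⟩
      · rw [itf_succ'] at hit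
        cases hfv : f v with
        | none => rw [hfv] at hit; simp at hit
        | some z => exact ⟨z, rfl⟩
    obtain ⟨p, hp1, hp⟩ := itf_pred hit
    have hwR : Reach G f X X' (w, false) := by
      rcases hw with (⟨hwu, hwR, _⟩ | ⟨hwX, _⟩) | ⟨hwY, hwR⟩
      · exact hwR
      · exact absurd hp (hX'noin w hwX p)
      · exact L_i3 hwR (Or.inr ⟨p, hp⟩)
    have hback := back_prop hinj (j0+1) hit (by omega) hwR
    rcases hv with (⟨hvu, _, hvnR⟩ | ⟨hvX, hvnR⟩) | ⟨hvY, _⟩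
    · exact hvnR hback.2
    · exact hvnR hback.1
    · obtain ⟨z, hz⟩ := hvout
      rw [hY'none v hvY] at hz; simp at hz
  have hinjOn : Set.InjOn σ (SepSet G f X X' Y Y') := by
    intro v hv w hw heq
    by_contra hne
    obtain ⟨hvX, a, ha⟩ := hσspec v hv
    obtain ⟨hwX, b, hb⟩ := hσspec w hw
    rw [heq] at ha
    rcases Nat.lt_trichotomy a b with h | h | h
    · have h2 : itf f (a + (b - a)) (σ w) = some w := by
        rw [show a + (b-a) = b by omega]; exact hb
      rw [itf_add, ha] at h2
      exact hkey v hv w hw (b-a) (by omega) (by simpa using h2)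
    · exact hne (by rw [h] at ha; exact Option.some_inj.mp (ha.symm.trans hb))
    · have h2 : itf f (b + (a - b)) (σ w) = some v := by
        rw [show b + (a-b) = a by omega]; exact ha
      rw [itf_add, hb] at h2
      exact hkey w hw v hv (a-b) (by omega) (by simpa using h2)
  exact Set.ncard_le_ncard_of_injOn σ (fun v hv => (hσspec v hv).1) hinjOn (Set.toFinite _)


/-! ### extracting a nodup chain list from reflexive-transitive closure -/

lemma rtg_list {α : Type} {r : α → α → Prop} {a b : α}
    (h : Relation.ReflTransGen r a b) :
    ∃ l : List α, l.IsChain r ∧ l.head? = some a ∧ l.getLast? = some b := by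
  induction h with
  | refl => exact ⟨[a], by simp, rfl, rfl⟩
  | @tail b' c hab hr ih =>
    obtain ⟨l, hc, hh, hl⟩ := ih
    refine ⟨l ++ [c], ?_, ?_, by rw [List.getLast?_concat]⟩
    · rw [List.isChain_append]
      refine ⟨hc, List.isChain_singleton c, ?_⟩
      intro x hx y hy
      simp only [hl, Option.mem_def, Option.some_inj] at hx
      simp only [List.head?_cons, Option.mem_def, Option.some_inj] at hy
      subst hx; subst hy; exact hr
    · rw [List.head?_append, hh]; rfl

lemma chain_dedup {α : Type} [DecidableEq α] {r : α → α → Prop} :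
    ∀ l : List α, l.IsChain r → ∃ l' : List α, l'.IsChain r ∧ l'.Nodup ∧
      l'.head? = l.head? ∧ l'.getLast? = l.getLast? := by
  intro l
  induction l with
  | nil => exact fun _ => ⟨[], by simp⟩
  | cons a t ih =>
    intro hc
    obtain ⟨t', ht'c, ht'nd, ht'h, ht'l⟩ := ih (List.isChain_cons.mp hc).2
    by_cases hat : a ∈ t'
    · obtain ⟨t₁, t₂, rfl⟩ := List.append_of_mem hat
      refine ⟨a :: t₂, ht'c.suffix ⟨t₁, rfl⟩, ((t₁.sublist_append_right _).nodup ht'nd), rfl, ?_⟩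
      have htne : t ≠ [] := by
        intro hc0
        rw [hc0] at ht'h
        have : t₁ ++ a :: t₂ = [] := List.head?_eq_none_iff.mp ht'h
        simp at this
      calc (a :: t₂).getLast? = (t₁ ++ a :: t₂).getLast? := by
            rw [List.getLast?_append]
            cases h2 : (a :: t₂).getLast? with
            | none => simp at h2
            | some z => rfl
        _ = t.getLast? := ht'l
        _ = (a :: t).getLast? := by
            rw [List.getLast?_cons]
            cases h3 : t.getLast? with
            | none => exact absurd (List.getLast?_eq_none_iff.mp h3) htne
            | some z => rfl
    · refine ⟨a :: t', List.isChain_cons.mpr ⟨?_, ht'c⟩, List.nodup_cons.mpr ⟨hat, ht'nd⟩, rfl, ?_⟩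
      · intro y hy
        rw [ht'h] at hy
        exact (List.isChain_cons.mp hc).1 y hy
      · rw [List.getLast?_cons, List.getLast?_cons, ht'l]

/-! ### steps of a list -/

def StepL {α : Type} (l : List α) (a b : α) : Prop :=
  ∃ i, l[i]? = some a ∧ l[i+1]? = some b

lemma stepL_rel {α : Type} {r : α → α → Prop} {l : List α} (hc : l.IsChain r) {a b : α}
    (h : StepL l a b) : r a b := by
  obtain ⟨i, ha, hb⟩ := h
  obtain ⟨hi, ha⟩ := List.getElem?_eq_some_iff.mp ha
  obtain ⟨hi1, hb⟩ := List.getElem?_eq_some_iff.mp hb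
  subst ha; subst hb
  exact List.isChain_iff_getElem.mp hc i (by omega)

lemma stepL_mem_left {α : Type} {l : List α} {a b : α} (h : StepL l a b) : a ∈ l := by
  obtain ⟨i, ha, _⟩ := h
  exact List.mem_iff_getElem?.mpr ⟨i, ha⟩

lemma stepL_mem_right {α : Type} {l : List α} {a b : α} (h : StepL l a b) : b ∈ l := by
  obtain ⟨i, _, hb⟩ := h
  exact List.mem_iff_getElem?.mpr ⟨i+1, hb⟩

lemma stepL_out_unique {α : Type} {l : List α} (hnd : l.Nodup) {a b c : α}
    (h1 : StepL l a b) (h2 : StepL l a c) : b = c := by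
  obtain ⟨i, ha, hb⟩ := h1
  obtain ⟨j, ha', hc⟩ := h2
  have hij : i = j := (List.getElem?_inj (List.getElem?_eq_some_iff.mp ha).1 hnd).mp (ha.trans ha'.symm)
  subst hij
  exact Option.some_inj.mp (hb.symm.trans hc)

lemma stepL_in_unique {α : Type} {l : List α} (hnd : l.Nodup) {a b c : α}
    (h1 : StepL l b a) (h2 : StepL l c a) : b = c := by
  obtain ⟨i, hb, ha⟩ := h1
  obtain ⟨j, hc, ha'⟩ := h2
  have hij : i + 1 = j + 1 := (List.getElem?_inj (List.getElem?_eq_some_iff.mp ha).1 hnd).mp (ha.trans ha'.symm)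
  have : i = j := by omega
  subst this
  exact Option.some_inj.mp (hb.symm.trans hc)

lemma stepL_head_no_in {α : Type} {l : List α} (hnd : l.Nodup) {a b : α}
    (hh : l.head? = some a) (h : StepL l b a) : False := by
  obtain ⟨i, hb, ha⟩ := h
  rw [List.head?_eq_getElem?] at hh
  have : i + 1 = 0 := (List.getElem?_inj (List.getElem?_eq_some_iff.mp ha).1 hnd).mp (ha.trans hh.symm)
  omega

lemma stepL_last_no_out {α : Type} {l : List α} (hnd : l.Nodup) {a b : α}
    (hl : l.getLast? = some a) (h : StepL l a b) : False := by
  obtain ⟨i, ha, hb⟩ := h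
  rw [List.getLast?_eq_getElem?] at hl
  have hi1 : i + 1 < l.length := (List.getElem?_eq_some_iff.mp hb).1
  have : i = l.length - 1 := (List.getElem?_inj (List.getElem?_eq_some_iff.mp ha).1 hnd).mp (ha.trans hl.symm)
  omega

lemma stepL_progress {α : Type} {l : List α} (hnd : l.Nodup) {a : α}
    (ha : a ∈ l) (hne : l.getLast? ≠ some a) : ∃ b, StepL l a b := by
  obtain ⟨i, hi⟩ := List.mem_iff_getElem?.mp ha
  have hilen : i < l.length := (List.getElem?_eq_some_iff.mp hi).1
  by_cases h1 : i + 1 < l.length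
  · exact ⟨l[i+1], i, hi, List.getElem?_eq_some_iff.mpr ⟨h1, rfl⟩⟩
  · exfalso
    apply hne
    rw [List.getLast?_eq_getElem?, show l.length - 1 = i by omega]
    exact hi

lemma stepL_entered {α : Type} {l : List α} {a : α}
    (ha : a ∈ l) (hne : l.head? ≠ some a) : ∃ b, StepL l b a := by
  obtain ⟨i, hi⟩ := List.mem_iff_getElem?.mp ha
  cases i with
  | zero => exact absurd (List.head?_eq_getElem?.trans hi) hne
  | succ j =>
    have hjlen : j < l.length := by
      have := (List.getElem?_eq_some_iff.mp hi).1; omega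
    exact ⟨l[j], j, List.getElem?_eq_some_iff.mpr ⟨hjlen, rfl⟩, hi⟩


/-! ### arc destructors -/

lemma D_out_false {c1 : V} {c : V × Bool} (h : Rf G f (c1, false) c) :
    (∃ q, c = (q, true) ∧ f q = some c1) ∨ (c = (c1, true) ∧ ¬ usedV f c1) := by
  obtain ⟨d1, d2⟩ := c
  rcases h with ⟨h1, _, _, _⟩ | ⟨_, h2, hf⟩ | ⟨_, h2, hb, hu⟩ | ⟨h1, _, _, _⟩
  · simp at h1
  · simp only at h2 hf; subst h2; exact Or.inl ⟨d1, rfl, hf⟩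
  · simp only at h2 hb; subst h2; subst hb; exact Or.inr ⟨rfl, hu⟩
  · simp at h1

lemma D_out_true {c1 : V} {c : V × Bool} (h : Rf G f (c1, true) c) :
    (∃ z, c = (z, false) ∧ G.Adj c1 z ∧ f c1 ≠ some z) ∨ (c = (c1, false) ∧ usedV f c1) := by
  obtain ⟨d1, d2⟩ := c
  rcases h with ⟨_, h2, ha, hf⟩ | ⟨h1, _, _⟩ | ⟨h1, _, _, _⟩ | ⟨_, h2, hb, hu⟩
  · simp only at h2 ha hf; subst h2; exact Or.inl ⟨d1, rfl, ha, hf⟩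
  · simp at h1
  · simp at h1
  · simp only at h2 hb; subst h2; subst hb; exact Or.inr ⟨rfl, hu⟩

lemma D_in_true {c1 : V} {c : V × Bool} (h : Rf G f c (c1, true)) :
    (∃ w, c = (w, false) ∧ f c1 = some w) ∨ (c = (c1, false) ∧ ¬ usedV f c1) := by
  obtain ⟨d1, d2⟩ := c
  rcases h with ⟨_, h2, _, _⟩ | ⟨h1, _, hf⟩ | ⟨h1, _, hb, hu⟩ | ⟨_, h2, _, _⟩
  · simp at h2
  · simp only at h1 hf; subst h1; exact Or.inl ⟨d1, rfl, hf⟩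
  · simp only at h1 hb; subst h1; subst hb; exact Or.inr ⟨rfl, hu⟩
  · simp at h2

/-! ### the augmentation -/

lemma augment [Fintype V] {G : SimpleGraph V} {f : V → Option V} {X X' Y Y' : Set V}
    (hXY : Disjoint X Y) (hX'X : X' ⊆ X) (hY'Y : Y' ⊆ Y)
    (hadj : ∀ u v, f u = some v → G.Adj u v)
    (hinj : ∀ u u' v, f u = some v → f u' = some v → u = u')
    (hX'out : ∀ x ∈ X', (f x).isSome)
    (hX'noin : ∀ x ∈ X', ∀ u, f u ≠ some x)
    (hsnkY' : ∀ v, (∃ u, f u = some v) → f v = none → v ∈ Y')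
    {x y : V} (hx : x ∈ X \ X') (hy : y ∈ Y \ Y')
    (l : List (V × Bool)) (hnd : l.Nodup) (hc : l.IsChain (Rf G f))
    (hh : l.head? = some (x, false)) (hl : l.getLast? = some (y, true)) :
    ∃ g : V → Option V,
      (∀ u v, g u = some v → G.Adj u v) ∧
      (∀ u u' v, g u = some v → g u' = some v → u = u') ∧
      (∀ v ∈ insert x X', IsSrc g v) ∧
      (∀ v, (∃ u, g u = some v) → g v = none → v ∈ insert y Y') := by
  classical
  have hxy : x ≠ y := fun hc0 => Set.disjoint_left.mp hXY hx.1 (hc0 ▸ hy.1)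
  have hxl : (x, false) ∈ l := by
    rw [List.head?_eq_getElem?] at hh
    exact List.mem_iff_getElem?.mpr ⟨0, hh⟩
  -- notation
  set Fwd : V → V → Prop := fun u v => StepL l (u, true) (v, false) ∧ u ≠ v with hFwd
  set Rev : V → V → Prop := fun u v => StepL l (v, false) (u, true) ∧ f u = some v with hRev
  -- progression/entrance with destructors
  have O1 : ∀ c : V × Bool, c ∈ l → c ≠ (y, true) → ∃ c', StepL l c c' ∧ Rf G f c c' := by
    intro c hcl hcy
    obtain ⟨c', hstep⟩ := stepL_progress hnd hcl (fun h => hcy (Option.some_inj.mp (h.symm.trans hl) ▸ rfl))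
    exact ⟨c', hstep, stepL_rel hc hstep⟩
  have I1 : ∀ c : V × Bool, c ∈ l → c ≠ (x, false) → ∃ c', StepL l c' c ∧ Rf G f c' c := by
    intro c hcl hcx
    obtain ⟨c', hstep⟩ := stepL_entered hcl (fun h => hcx (Option.some_inj.mp (h.symm.trans hh) ▸ rfl))
    exact ⟨c', hstep, stepL_rel hc hstep⟩
  -- K1 : Fwd u v → f u = some w → Rev u w
  have K1 : ∀ u v w, Fwd u v → f u = some w → Rev u w := by
    intro u v w hF hf
    have hul : (u, true) ∈ l := stepL_mem_left hF.1
    obtain ⟨c', hstep, hrf⟩ := I1 (u, true) hul (by simp)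
    rcases D_in_true hrf with ⟨w', rfl, hw'⟩ | ⟨rfl, hnu⟩
    · have : w' = w := Option.some_inj.mp (hw'.symm.trans hf)
      subst this
      exact ⟨hstep, hf⟩
    · exact absurd (Or.inl (by simp [hf])) hnu
  -- K2 : (v,false) ∈ l and v has f-in-edge p, then the walk reverses p→v
  have K2 : ∀ v p, (v, false) ∈ l → f p = some v → Rev p v := by
    intro v p hvl hp
    obtain ⟨c', hstep, hrf⟩ := O1 (v, false) hvl (by simp)
    rcases D_out_false hrf with ⟨q, rfl, hq⟩ | ⟨rfl, hnu⟩
    · have : q = p := hinj q p v hq hp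
      subst this
      exact ⟨hstep, hq⟩
    · exact absurd (Or.inr ⟨p, hp⟩) hnu
  -- K3 : (v,false) never occurs for v ∈ X'
  have K3 : ∀ v ∈ X', (v, false) ∉ l := by
    intro v hv hvl
    obtain ⟨c', hstep, hrf⟩ := O1 (v, false) hvl (by simp)
    rcases D_out_false hrf with ⟨q, rfl, hq⟩ | ⟨rfl, hnu⟩
    · exact hX'noin v hv q hq
    · exact hnu (Or.inl (hX'out v hv))
  -- K6 : out-step of a (v,true) node
  have K6 : ∀ v, (v, true) ∈ l → v ≠ y → (∃ z, Fwd v z) ∨ StepL l (v, true) (v, false) := by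
    intro v hvl hvy
    obtain ⟨c', hstep, hrf⟩ := O1 (v, true) hvl (by simp [hvy])
    rcases D_out_true hrf with ⟨z, rfl, hzadj, hzf⟩ | ⟨rfl, _⟩
    · exact Or.inl ⟨z, hstep, hzadj.ne⟩
    · exact Or.inr hstep
  -- the augmented function
  set g : V → Option V := fun u =>
    if h : ∃ v, Fwd u v then some h.choose
    else if h2 : ∃ v, f u = some v ∧ ¬ Rev u v then some h2.choose else none with hg
  have g_iff : ∀ u v, g u = some v ↔ Fwd u v ∨ (f u = some v ∧ ¬ Rev u v) := by
    intro u v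
    constructor
    · intro h
      simp only [hg] at h
      split at h
      · next hex =>
        left
        have := hex.choose_spec
        rwa [Option.some_inj.mp h] at this
      · split at h
        · next hex2 =>
          right
          have := hex2.choose_spec
          rwa [Option.some_inj.mp h] at this
        · simp at h
    · intro h
      rcases h with hF | ⟨hf, hnR⟩
      · have hex : ∃ v, Fwd u v := ⟨v, hF⟩
        simp only [hg]
        rw [dif_pos hex]
        have h1 := hex.choose_spec
        have h2 : (hex.choose, false) = (v, false) := stepL_out_unique hnd h1.1 hF.1
        rw [show hex.choose = v from congrArg Prod.fst h2]
      · by_cases hex : ∃ v', Fwd u v'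
        · exact absurd (K1 u hex.choose v hex.choose_spec hf) hnR
        · have hex2 : ∃ v', f u = some v' ∧ ¬ Rev u v' := ⟨v, hf, hnR⟩
          simp only [hg]
          rw [dif_neg hex, dif_pos hex2]
          have h1 := hex2.choose_spec
          rw [show hex2.choose = v from Option.some_inj.mp (h1.1.symm.trans hf)]
  refine ⟨g, ?_, ?_, ?_, ?_⟩
  · -- adjacency
    intro u v h
    rcases (g_iff u v).mp h with hF | ⟨hf, _⟩
    · rcases D_out_true (stepL_rel hc hF.1) with ⟨z, hz, hzadj, _⟩ | ⟨hz, _⟩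
      · simp only [Prod.mk.injEq, and_true] at hz
        rw [hz]
        exact hzadj
      · simp only [Prod.mk.injEq, and_true] at hz
        exact absurd hz.symm hF.2
    · exact hadj u v hf
  · -- in-uniqueness
    intro u u' v h h'
    rcases (g_iff u v).mp h with hF | ⟨hf, hnR⟩ <;>
      rcases (g_iff u' v).mp h' with hF' | ⟨hf', hnR'⟩
    · exact congrArg Prod.fst (stepL_in_unique hnd hF.1 hF'.1)
    · exact absurd (K2 v u' (stepL_mem_right hF.1) hf') hnR'
    · exact absurd (K2 v u (stepL_mem_right hF'.1) hf) hnR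
    · exact hinj u u' v hf hf'
  · -- sources
    rintro v hv
    have hvy : v ≠ y := by
      rcases hv with rfl | hv
      · exact hxy
      · exact fun hc0 => Set.disjoint_left.mp hXY (hX'X hv) (hc0 ▸ hy.1)
    constructor
    · -- v has an out-edge
      rw [Option.isSome_iff_exists]
      rcases hv with rfl | hv
      · -- v = x
        by_cases husd : usedV f v
        · have hvout : ∃ w, f v = some w := by
            cases hfv : f v with
            | some w => exact ⟨w, rfl⟩
            | none =>
              exfalso
              rcases husd with hs | hin
              · rw [hfv] at hs; simp at hs
              · exact hx.2 (absurd (hsnkY' v hin hfv) (fun hY' =>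
                  Set.disjoint_left.mp hXY hx.1 (hY'Y hY')))
          obtain ⟨w, hw⟩ := hvout
          by_cases hR : Rev v w
          · rcases K6 v (stepL_mem_right hR.1) hvy with ⟨z, hz⟩ | hstep
            · exact ⟨z, (g_iff v z).mpr (Or.inl hz)⟩
            · exact absurd hstep (fun hs => stepL_head_no_in hnd hh hs)
          · exact ⟨w, (g_iff v w).mpr (Or.inr ⟨hw, hR⟩)⟩
        · -- x unused : the walk starts with the internal arc
          obtain ⟨c', hstep, hrf⟩ := O1 (v, false) hxl (by simp)
          rcases D_out_false hrf with ⟨q, rfl, hq⟩ | ⟨rfl, _⟩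
          · exact absurd (Or.inr ⟨q, hq⟩) husd
          · rcases K6 v (stepL_mem_right hstep) hvy with ⟨z, hz⟩ | hstep2
            · exact ⟨z, (g_iff v z).mpr (Or.inl hz)⟩
            · exact absurd hstep2 (fun hs => stepL_head_no_in hnd hh hs)
      · -- v ∈ X'
        obtain ⟨w, hw⟩ := Option.isSome_iff_exists.mp (hX'out v hv)
        by_cases hR : Rev v w
        · rcases K6 v (stepL_mem_right hR.1) hvy with ⟨z, hz⟩ | hstep
          · exact ⟨z, (g_iff v z).mpr (Or.inl hz)⟩
          · exact absurd (stepL_mem_right hstep) (K3 v hv)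
        · exact ⟨w, (g_iff v w).mpr (Or.inr ⟨hw, hR⟩)⟩
    · -- v has no in-edge
      intro u hu
      rcases (g_iff u v).mp hu with hF | ⟨hf, hnR⟩
      · rcases hv with rfl | hv
        · exact stepL_head_no_in hnd hh hF.1
        · exact K3 v hv (stepL_mem_right hF.1)
      · rcases hv with rfl | hv
        · exact hnR (K2 v u hxl hf)
        · exact hX'noin v hv u hf
  · -- sinks
    intro v hvin hvnone
    obtain ⟨u, hu⟩ := hvin
    by_cases hfv : ∃ w, f v = some w
    · obtain ⟨w, hw⟩ := hfv
      have hR : Rev v w := by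
        by_contra hnR
        rw [(g_iff v w).mpr (Or.inr ⟨hw, hnR⟩)] at hvnone
        simp at hvnone
      by_cases hvy : v = y
      · exact hvy ▸ Set.mem_insert _ _
      · exfalso
        rcases K6 v (stepL_mem_right hR.1) hvy with ⟨z, hz⟩ | hstep
        · rw [(g_iff v z).mpr (Or.inl hz)] at hvnone
          simp at hvnone
        · -- (v,false) ∈ l and thus v cannot have a g-in-edge
          rcases (g_iff u v).mp hu with hF | ⟨hf, hnR⟩
          · have := stepL_in_unique hnd hF.1 hstep
            exact hF.2 (congrArg Prod.fst this)
          · exact hnR (K2 v u (stepL_mem_right hstep) hf)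
    · -- f v = none
      have hfvnone : f v = none := by
        cases hfv2 : f v with
        | none => rfl
        | some w => exact absurd ⟨w, hfv2⟩ hfv
      rcases (g_iff u v).mp hu with hF | ⟨hf, _⟩
      · -- entered by a Fwd edge
        by_cases hvinf : ∃ p, f p = some v
        · exact Set.mem_insert_of_mem _ (hsnkY' v hvinf hfvnone)
        · -- v unused
          have husd : ¬ usedV f v := by
            rintro (hs | hin)
            · rw [hfvnone] at hs; simp at hs
            · exact hvinf hin
          obtain ⟨c', hstep, hrf⟩ := O1 (v, false) (stepL_mem_right hF.1) (by simp)
          rcases D_out_false hrf with ⟨q, rfl, hq⟩ | ⟨rfl, _⟩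
          · exact absurd ⟨q, hq⟩ hvinf
          · by_cases hvy : v = y
            · exact hvy ▸ Set.mem_insert _ _
            · exfalso
              rcases K6 v (stepL_mem_right hstep) hvy with ⟨z, hz⟩ | hstep2
              · rw [(g_iff v z).mpr (Or.inl hz)] at hvnone
                simp at hvnone
              · have := stepL_in_unique hnd hF.1 hstep2
                exact hF.2 (congrArg Prod.fst this)
      · exact Set.mem_insert_of_mem _ (hsnkY' v ⟨u, hf⟩ hfvnone)


end AugAux

open AugAux in
/-- Augmenting path lemma: if `X' ⊂ X`, `Y' ⊂ Y` with `|X'| = |Y'| = μ_G(X',Y') < μ_G(X,Y)`,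
then there are `x ∈ X \ X'` and `y ∈ Y \ Y'` together with a family of `μ_G(X',Y') + 1`
pairwise vertex-disjoint paths from `X' ∪ {x}` to `Y' ∪ {y}`. -/
theorem stmt6 [Fintype V] (G : SimpleGraph V) (X Y X' Y' : Set V)
    (hXY : Disjoint X Y) (hX' : X' ⊂ X) (hY' : Y' ⊂ Y)
    (hcard : X'.ncard = Y'.ncard) (hsat : X'.ncard = mu G X' Y')
    (hlt : mu G X' Y' < mu G X Y) :
    ∃ x ∈ X \ X', ∃ y ∈ Y \ Y',
      DisjointPathFamily G (X' ∪ {x}) (Y' ∪ {y}) (mu G X' Y' + 1) := by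
  classical
  have hX'Y' : Disjoint X' Y' := Disjoint.mono hX'.subset hY'.subset hXY
  obtain ⟨f, s, t, ρ, hadj, hinj, hrank, hsA, htB, hsinj, htinj, hsout, hsnoin, htnone,
    htin, hsrcS, hsnkT⟩ := enc_of_fam hX'Y' (dpf_mu G X' Y')
  have hkX : X'.ncard = mu G X' Y' := hsat
  have hkY : Y'.ncard = mu G X' Y' := hcard ▸ hsat
  -- the sources are exactly X', the sinks exactly Y'
  have hrs : (Set.range s).ncard = mu G X' Y' := by
    have h0 : Nat.card (Set.range s) = Nat.card (Fin (mu G X' Y')) :=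
      Nat.card_range_of_injective hsinj
    rwa [Nat.card_coe_set_eq, Nat.card_eq_fintype_card, Fintype.card_fin] at h0
  have hrt : (Set.range t).ncard = mu G X' Y' := by
    have h0 : Nat.card (Set.range t) = Nat.card (Fin (mu G X' Y')) :=
      Nat.card_range_of_injective htinj
    rwa [Nat.card_coe_set_eq, Nat.card_eq_fintype_card, Fintype.card_fin] at h0
  have hrange_s : Set.range s = X' := by
    apply Set.eq_of_subset_of_ncard_le (Set.range_subset_iff.mpr hsA)
    rw [hrs, hkX]
  have hrange_t : Set.range t = Y' := by
    apply Set.eq_of_subset_of_ncard_le (Set.range_subset_iff.mpr htB)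
    rw [hrt, hkY]
  have hX'out : ∀ x ∈ X', (f x).isSome := by
    intro x hx
    obtain ⟨i, rfl⟩ := hrange_s ▸ hx
    exact hsout i
  have hX'noin : ∀ x ∈ X', ∀ u, f u ≠ some x := by
    intro x hx
    obtain ⟨i, rfl⟩ := hrange_s ▸ hx
    exact hsnoin i
  have hY'none : ∀ y ∈ Y', f y = none := by
    intro y hy
    obtain ⟨i, rfl⟩ := hrange_t ▸ hy
    exact htnone i
  have hY'in : ∀ y ∈ Y', ∃ u, f u = some y := by
    intro y hy
    obtain ⟨i, rfl⟩ := hrange_t ▸ hy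
    exact htin i
  have hsrcX' : ∀ v, (f v).isSome → (∀ u, f u ≠ some v) → v ∈ X' := by
    intro v h1 h2
    obtain ⟨i, rfl⟩ := hsrcS v h1 h2
    exact hrange_s ▸ Set.mem_range_self i
  have hsnkY' : ∀ v, (∃ u, f u = some v) → f v = none → v ∈ Y' := by
    intro v h1 h2
    obtain ⟨i, rfl⟩ := hsnkT v h1 h2
    exact hrange_t ▸ Set.mem_range_self i
  by_cases hcase : ∃ y ∈ Y \ Y', Reach G f X X' (y, true)
  · -- augmenting walk exists
    obtain ⟨y, hy, x, hx, hrtg⟩ := hcase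
    obtain ⟨l0, hc0, hh0, hl0⟩ := rtg_list hrtg
    obtain ⟨l, hcl, hndl, hhl, hlll⟩ := chain_dedup l0 hc0
    rw [hh0] at hhl
    rw [hl0] at hlll
    obtain ⟨g, hgadj, hginj, hgsrc, hgsnk⟩ := augment hXY hX'.subset hY'.subset hadj hinj
      hX'out hX'noin hsnkY' hx hy l hndl hcl hhl hlll
    refine ⟨x, hx, y, hy, ?_⟩
    have hfin : (insert x X' : Set V).Finite := Set.toFinite _
    have hcard' : hfin.toFinset.card = mu G X' Y' + 1 := by
      rw [← Set.ncard_eq_toFinset_card _ hfin,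
        Set.ncard_insert_of_notMem hx.2 (Set.toFinite _), hkX]
    let e := Finset.equivFinOfCardEq hcard'
    have hfam : DisjointPathFamily G (insert x X') (insert y Y') (mu G X' Y' + 1) := by
      apply fam_of_fun g hgadj hginj (fun i => (e.symm i : V))
      · intro i j hij
        exact e.symm.injective (Subtype.val_injective hij)
      · intro i
        exact hgsrc _ (hfin.mem_toFinset.mp (e.symm i).2)
      · intro i
        exact hfin.mem_toFinset.mp (e.symm i).2
      · exact hgsnk
    rwa [Set.union_singleton, Set.union_singleton]
  · -- no augmenting walk: contradiction with `mu G X Y > mu G X' Y'`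
    exfalso
    push_neg at hcase
    obtain ⟨ps, pt, P, hps, hpt, hpp, hpd⟩ :=
      dpf_mono (dpf_mu G X Y) (show mu G X' Y' + 1 ≤ mu G X Y by omega)
    have hmeets : ∀ i, ∃ z ∈ (P i).support, z ∈ SepSet G f X X' Y Y' := by
      intro i
      by_cases hR : Reach G f X X' (ps i, false)
      · exact walk_meets hinj hcase (P i) hR (hpt i)
      · by_cases hX'i : ps i ∈ X'
        · exact ⟨ps i, Walk.start_mem_support _, Or.inl (Or.inr ⟨hX'i, hR⟩)⟩
        · exact absurd ⟨ps i, ⟨hps i, hX'i⟩, Relation.ReflTransGen.refl⟩ hR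
    choose z hzmem hzS using hmeets
    have hzinj : Function.Injective z := by
      intro i j hij
      by_contra hne
      refine hpd i j hne (z i) (hzmem i) ?_
      rw [hij]
      exact hzmem j
    have h1 : mu G X' Y' + 1 ≤ (SepSet G f X X' Y Y').ncard := by
      have hr : (Set.range z).ncard = mu G X' Y' + 1 := by
        have h0 : Nat.card (Set.range z) = Nat.card (Fin (mu G X' Y' + 1)) :=
          Nat.card_range_of_injective hzinj
        rwa [Nat.card_coe_set_eq, Nat.card_eq_fintype_card, Fintype.card_fin] at h0
      rw [← hr]
      exact Set.ncard_le_ncard (Set.range_subset_iff.mpr hzS) (Set.toFinite _)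
    have h2 := sep_ncard_le (G := G) (X := X) (Y := Y) hinj hrank hsrcX' hX'out hX'noin hY'none hY'in
    omega
end

section
/- In the cylindrical grid C_k^m with k ≥ 3 and m ≥ k², if s₁,...,s_{k-1} lie in this cyclic (clockwise) order on the innermost cycle C¹ and t₁,...,t_{k-1} lie in this cyclic (clockwise) order on the outermost cycle C^m, then there exist pairwise vertex-disjoint paths P₁,...,P_{k-1} with P_i connecting s_i to t_i. -/
/-- The `(k,m)`-cylindrical grid: vertex `(i,j)` lies on the `j`-th concentric cycle at
angular position `i`; cycle edges go between consecutive angular positions (mod `k`),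
radial edges between consecutive cycles. -/
def cylGrid (k m : ℕ) : SimpleGraph (Fin k × Fin m) where
  Adj p q := p ≠ q ∧
    ((p.2 = q.2 ∧ (((p.1 : ℕ) + 1) % k = (q.1 : ℕ) ∨ ((q.1 : ℕ) + 1) % k = (p.1 : ℕ))) ∨
      (p.1 = q.1 ∧ ((p.2 : ℕ) + 1 = (q.2 : ℕ) ∨ (q.2 : ℕ) + 1 = (p.2 : ℕ))))
  symm := by
    constructor
    rintro p q ⟨hne, h⟩
    refine ⟨hne.symm, ?_⟩
    rcases h with ⟨h1, h2⟩ | ⟨h1, h2⟩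
    · exact Or.inl ⟨h1.symm, h2.symm⟩
    · exact Or.inr ⟨h1.symm, h2.symm⟩
  loopless := ⟨fun p h => h.1 rfl⟩

/-- A sequence of angular positions is in clockwise cyclic order if some rotation makes
it strictly increasing modulo `k`. -/
def InCwCyclicOrder (k n : ℕ) (s : Fin n → Fin k) : Prop :=
  ∃ r : ℕ, StrictMono fun a => ((s a : ℕ) + r) % k

namespace CylAux


lemma emod_add_one (x n : ℤ) : (x % n + 1) % n = (x + 1) % n := by
  rw [Int.add_emod, Int.emod_emod_of_dvd _ dvd_rfl, ← Int.add_emod]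

lemma dvd_small_eq_zero {n x : ℤ} (hn : 0 < n) (hd : n ∣ x) (h1 : -n < x) (h2 : x < n) :
    x = 0 := by
  obtain ⟨q, rfl⟩ := hd
  have hq1 : q < 1 := (mul_lt_mul_iff_right₀ hn).mp (by linarith [mul_one n])
  have hq2 : -1 < q := by
    have := (mul_lt_mul_iff_right₀ hn).mp (show n * (-1) < n * q by linarith)
    linarith
  have hq : q = 0 := by omega
  simp [hq]

lemma exists_param {k : ℕ} (hk : 3 ≤ k) (s : Fin (k - 1) → Fin k)
    (hcs : InCwCyclicOrder k (k - 1) s) :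
    ∃ h c : ℤ, ∀ a : Fin (k - 1),
      ((s a : ℕ) : ℤ) = (h + 1 + (((a : ℕ) : ℤ) - c) % ((k : ℤ) - 1)) % (k : ℤ) := by
  obtain ⟨r, hr⟩ := hcs
  set g : Fin (k - 1) → ℕ := fun a => ((s a : ℕ) + r) % k with hgdef
  have hglt : ∀ a, g a < k := fun a => Nat.mod_lt _ (by omega)
  have hA : ∀ d (a b : Fin (k - 1)), (a : ℕ) + d = (b : ℕ) → g a + d ≤ g b := by
    intro d
    induction d with
    | zero =>
      intro a b hab
      have : a = b := Fin.ext (by omega)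
      subst this; omega
    | succ d ih =>
      intro a b hab
      have hb' : (a : ℕ) + d < k - 1 := by have := b.isLt; omega
      have h1 := ih a ⟨(a : ℕ) + d, hb'⟩ rfl
      have h2 : g ⟨(a : ℕ) + d, hb'⟩ < g b := hr (by simp [Fin.lt_def]; omega)
      omega
  set z : Fin (k - 1) := ⟨0, by omega⟩ with hz
  have hlow : ∀ a : Fin (k - 1), g z + (a : ℕ) ≤ g a := by
    intro a
    exact hA (a : ℕ) z a (by show 0 + (a : ℕ) = (a : ℕ); omega)
  have hhigh : ∀ a : Fin (k - 1), g a ≤ g z + (a : ℕ) + 1 := by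
    intro a
    have hlt := a.isLt
    have h1 := hA (k - 2 - (a : ℕ)) a ⟨k - 2, by omega⟩
      (by show (a : ℕ) + (k - 2 - (a : ℕ)) = k - 2; omega)
    have h2 := hglt ⟨k - 2, by omega⟩
    have h3 := hlow a
    omega
  have hdich : ∀ a : Fin (k - 1), g a = g z + (a : ℕ) ∨ g a = g z + (a : ℕ) + 1 := by
    intro a; have := hlow a; have := hhigh a; omega
  have hjm : ∀ a b : Fin (k - 1), (a : ℕ) ≤ (b : ℕ) → g a = g z + (a : ℕ) + 1 →
      g b = g z + (b : ℕ) + 1 := by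
    intro a b hab ha
    have h1 := hA ((b : ℕ) - (a : ℕ)) a b (by omega)
    have := hdich b
    omega
  set S : Set ℕ := {n | ∀ a : Fin (k - 1), n ≤ (a : ℕ) → g a = g z + (a : ℕ) + 1} with hS
  have hSne : (k - 1) ∈ S := by
    intro a ha; have := a.isLt; omega
  set J : ℕ := sInf S with hJ
  have hJmem : J ∈ S := Nat.sInf_mem ⟨k - 1, hSne⟩
  have hJle : J ≤ k - 1 := Nat.sInf_le hSne
  have hbelow : ∀ a : Fin (k - 1), (a : ℕ) < J → g a = g z + (a : ℕ) := by
    intro a ha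
    rcases hdich a with h | h
    · exact h
    · exfalso
      have hmem : (a : ℕ) ∈ S := fun b hb => hjm a b hb h
      have := Nat.sInf_le hmem
      omega
  refine ⟨(g z : ℤ) - r + J, (J : ℤ), ?_⟩
  intro a
  have key : ((g a : ℤ) - (r : ℤ)) % (k : ℤ) = ((s a : ℕ) : ℤ) := by
    have h1 : (g a : ℤ) = (((s a : ℕ) : ℤ) + (r : ℤ)) % (k : ℤ) := by
      have h0 : g a = ((s a : ℕ) + r) % k := rfl
      rw [h0]; push_cast; ring
    rw [h1, Int.sub_emod, Int.emod_emod_of_dvd _ dvd_rfl, ← Int.sub_emod,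
        add_sub_cancel_right, Int.emod_eq_of_lt (by positivity)
        (by exact_mod_cast (s a).isLt)]
  rw [← key]
  have hkZ : (3 : ℤ) ≤ (k : ℤ) := by exact_mod_cast hk
  have haZ : ((a : ℕ) : ℤ) ≤ (k : ℤ) - 2 := by have := a.isLt; omega
  have haZ0 : (0 : ℤ) ≤ ((a : ℕ) : ℤ) := by positivity
  have hJZ : (J : ℤ) ≤ (k : ℤ) - 1 := by omega
  rcases lt_or_ge ((a : ℕ)) J with hc | hc
  · have hga : g a = g z + (a : ℕ) := hbelow a hc
    have hcZ : ((a : ℕ) : ℤ) < (J : ℤ) := by exact_mod_cast hc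
    have hmod : (((a : ℕ) : ℤ) - (J : ℤ)) % ((k : ℤ) - 1)
        = ((a : ℕ) : ℤ) - J + ((k : ℤ) - 1) := by
      have h1 : (((a : ℕ) : ℤ) - J) % ((k : ℤ) - 1)
          = ((((a : ℕ) : ℤ) - J + ((k : ℤ) - 1)) + ((k : ℤ) - 1) * (-1)) % ((k : ℤ) - 1) := by
        congr 1; ring
      rw [h1, Int.add_mul_emod_self_left, Int.emod_eq_of_lt (by omega) (by omega)]
    rw [hmod]
    have hgaZ : (g a : ℤ) = (g z : ℤ) + ((a : ℕ) : ℤ) := by exact_mod_cast hga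
    have h2 : (g z : ℤ) - r + J + 1 + (((a : ℕ) : ℤ) - J + ((k : ℤ) - 1))
        = ((g a : ℤ) - r) + (k : ℤ) * 1 := by rw [hgaZ]; ring
    rw [h2, Int.add_mul_emod_self_left]
  · have hga : g a = g z + (a : ℕ) + 1 := hJmem a hc
    have hcZ : (J : ℤ) ≤ ((a : ℕ) : ℤ) := by exact_mod_cast hc
    have hmod : (((a : ℕ) : ℤ) - (J : ℤ)) % ((k : ℤ) - 1) = ((a : ℕ) : ℤ) - J :=
      Int.emod_eq_of_lt (by omega) (by omega)
    rw [hmod]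
    have hgaZ : (g a : ℤ) = (g z : ℤ) + ((a : ℕ) : ℤ) + 1 := by exact_mod_cast hga
    congr 1
    rw [hgaZ]; ring

/-- token `a`'s angle (as an integer in `[0,k)`) at level `ℓ`. -/
def posZ (k : ℕ) (h c N : ℤ) (a : ℕ) (ℓ : ℕ) : ℤ :=
  (h + 1 - min (ℓ : ℤ) N + (((a : ℤ) - c + min (ℓ : ℤ) N) % ((k : ℤ) - 1))) % (k : ℤ)

variable {k : ℕ} {h c N : ℤ}

lemma posZ_nonneg (hk : 0 < k) {a ℓ : ℕ} : 0 ≤ posZ k h c N a ℓ :=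
  Int.emod_nonneg _ (by exact_mod_cast hk.ne')

lemma posZ_lt (hk : 0 < k) {a ℓ : ℕ} : posZ k h c N a ℓ < (k : ℤ) :=
  Int.emod_lt_of_pos _ (by exact_mod_cast hk)

def posF (hk : 0 < k) (h c N : ℤ) (a : Fin (k - 1)) (ℓ : ℕ) : Fin k :=
  ⟨(posZ k h c N (a : ℕ) ℓ).toNat, by
    have h1 := posZ_nonneg (k := k) (h := h) (c := c) (N := N) (a := (a : ℕ)) (ℓ := ℓ) hk
    have h2 := posZ_lt (k := k) (h := h) (c := c) (N := N) (a := (a : ℕ)) (ℓ := ℓ) hk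
    omega⟩

lemma posF_cast (hk : 0 < k) {a : Fin (k - 1)} {ℓ : ℕ} :
    ((posF hk h c N a ℓ : ℕ) : ℤ) = posZ k h c N (a : ℕ) ℓ :=
  Int.toNat_of_nonneg (posZ_nonneg hk)

lemma min_cases_succ (hN : 0 ≤ N) (ℓ : ℕ) :
    min ((ℓ + 1 : ℕ) : ℤ) N = min (ℓ : ℤ) N ∨
      min ((ℓ + 1 : ℕ) : ℤ) N = min (ℓ : ℤ) N + 1 := by
  push_cast; omega

lemma posZ_succ_stay {ℓ : ℕ} (hL : min ((ℓ + 1 : ℕ) : ℤ) N = min (ℓ : ℤ) N) (a : ℕ) :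
    posZ k h c N a (ℓ + 1) = posZ k h c N a ℓ := by
  unfold posZ; rw [hL]

lemma posZ_succ_eq (hk : 3 ≤ k) {ℓ : ℕ}
    (hL : min ((ℓ + 1 : ℕ) : ℤ) N = min (ℓ : ℤ) N + 1) (a : ℕ)
    (he : ((a : ℤ) - c + min (ℓ : ℤ) N) % ((k : ℤ) - 1) ≠ (k : ℤ) - 2) :
    posZ k h c N a (ℓ + 1) = posZ k h c N a ℓ := by
  have hkZ : (3 : ℤ) ≤ (k : ℤ) := by exact_mod_cast hk
  have hE0 : 0 ≤ ((a : ℤ) - c + min (ℓ : ℤ) N) % ((k : ℤ) - 1) :=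
    Int.emod_nonneg _ (by omega)
  have hE1 : ((a : ℤ) - c + min (ℓ : ℤ) N) % ((k : ℤ) - 1) < (k : ℤ) - 1 :=
    Int.emod_lt_of_pos _ (by omega)
  unfold posZ
  rw [hL]
  have h1 : ((a : ℤ) - c + (min (ℓ : ℤ) N + 1)) % ((k : ℤ) - 1)
      = ((a : ℤ) - c + min (ℓ : ℤ) N) % ((k : ℤ) - 1) + 1 := by
    rw [show (a : ℤ) - c + (min (ℓ : ℤ) N + 1) = ((a : ℤ) - c + min (ℓ : ℤ) N) + 1 by ring,
      ← emod_add_one, Int.emod_eq_of_lt (by omega) (by omega)]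
  rw [h1]
  congr 1; ring

lemma posZ_succ_move (hk : 3 ≤ k) {ℓ : ℕ}
    (hL : min ((ℓ + 1 : ℕ) : ℤ) N = min (ℓ : ℤ) N + 1) (a : ℕ)
    (he : ((a : ℤ) - c + min (ℓ : ℤ) N) % ((k : ℤ) - 1) = (k : ℤ) - 2) :
    posZ k h c N a (ℓ + 1) = (h - min (ℓ : ℤ) N) % (k : ℤ) := by
  have hkZ : (3 : ℤ) ≤ (k : ℤ) := by exact_mod_cast hk
  unfold posZ
  rw [hL]
  have h1 : ((a : ℤ) - c + (min (ℓ : ℤ) N + 1)) % ((k : ℤ) - 1) = 0 := by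
    rw [show (a : ℤ) - c + (min (ℓ : ℤ) N + 1) = ((a : ℤ) - c + min (ℓ : ℤ) N) + 1 by ring,
      ← emod_add_one, he, show (k : ℤ) - 2 + 1 = (k : ℤ) - 1 by ring, Int.emod_self]
  rw [h1]
  congr 1; ring

lemma posF_step (hk : 3 ≤ k) (hN : 0 ≤ N) (a : Fin (k - 1)) (ℓ : ℕ) :
    posF (by omega : 0 < k) h c N a (ℓ + 1) = posF (by omega) h c N a ℓ ∨
      ((posF (by omega : 0 < k) h c N a ℓ : ℕ) + 1) % k
        = (posF (by omega : 0 < k) h c N a (ℓ + 1) : ℕ) := by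
  have hk0 : 0 < k := by omega
  have hkZ : (3 : ℤ) ≤ (k : ℤ) := by exact_mod_cast hk
  rcases min_cases_succ (N := N) hN ℓ with hL | hL
  · left
    apply Fin.ext
    have := posZ_succ_stay (k := k) (h := h) (c := c) hL (a : ℕ)
    simp only [posF]
    rw [this]
  · by_cases he : ((a : ℤ) - c + min (ℓ : ℤ) N) % ((k : ℤ) - 1) = (k : ℤ) - 2
    · right
      have hz := posZ_succ_move (h := h) hk hL (a : ℕ) he
      have hvL : posZ k h c N (a : ℕ) ℓ = (h + 1 - min (ℓ : ℤ) N + ((k : ℤ) - 2)) % (k : ℤ) := by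
        unfold posZ; rw [he]
      have h1 : ((((posF hk0 h c N a ℓ : ℕ) + 1) % k : ℕ) : ℤ)
          = (posZ k h c N (a : ℕ) ℓ + 1) % (k : ℤ) := by
        rw [Int.natCast_mod]
        push_cast
        rw [posF_cast hk0]
      have h2 : (posZ k h c N (a : ℕ) ℓ + 1) % (k : ℤ) = posZ k h c N (a : ℕ) (ℓ + 1) := by
        rw [hvL, emod_add_one, hz,
          show h + 1 - min (ℓ : ℤ) N + ((k : ℤ) - 2) + 1
            = (h - min (ℓ : ℤ) N) + (k : ℤ) * 1 by ring,
          Int.add_mul_emod_self_left]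
      have h3 : ((posF hk0 h c N a (ℓ + 1) : ℕ) : ℤ) = posZ k h c N (a : ℕ) (ℓ + 1) :=
        posF_cast hk0
      have := h1.trans (h2.trans h3.symm)
      exact_mod_cast this
    · left
      apply Fin.ext
      have := posZ_succ_eq (h := h) hk hL (a : ℕ) he
      simp only [posF]
      rw [this]

lemma posF_inj (hk : 3 ≤ k) {a b : Fin (k - 1)} (ℓ : ℕ) (hne : a ≠ b) :
    posF (by omega : 0 < k) h c N a ℓ ≠ posF (by omega) h c N b ℓ := by
  have hk0 : 0 < k := by omega
  have hkZ : (3 : ℤ) ≤ (k : ℤ) := by exact_mod_cast hk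
  intro hEq
  have hvals : posZ k h c N (a : ℕ) ℓ = posZ k h c N (b : ℕ) ℓ := by
    rw [← posF_cast hk0 (a := a), ← posF_cast hk0 (a := b), hEq]
  set Ea := ((a : ℤ) - c + min (ℓ : ℤ) N) % ((k : ℤ) - 1) with hEa
  set Eb := (((b : ℕ) : ℤ) - c + min (ℓ : ℤ) N) % ((k : ℤ) - 1) with hEb
  have hEa0 : 0 ≤ Ea := Int.emod_nonneg _ (by omega)
  have hEa1 : Ea < (k : ℤ) - 1 := Int.emod_lt_of_pos _ (by omega)
  have hEb0 : 0 ≤ Eb := Int.emod_nonneg _ (by omega)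
  have hEb1 : Eb < (k : ℤ) - 1 := Int.emod_lt_of_pos _ (by omega)
  have hsub : (k : ℤ) ∣ Ea - Eb := by
    have h1 : ((h + 1 - min (ℓ : ℤ) N + Ea) - (h + 1 - min (ℓ : ℤ) N + Eb)) % (k : ℤ) = 0 :=
      Int.emod_eq_emod_iff_emod_sub_eq_zero.mp hvals
    have h2 : (h + 1 - min (ℓ : ℤ) N + Ea) - (h + 1 - min (ℓ : ℤ) N + Eb) = Ea - Eb := by ring
    exact Int.dvd_of_emod_eq_zero (h2 ▸ h1)
  have hEab : Ea = Eb := by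
    have := dvd_small_eq_zero (show (0 : ℤ) < k by omega) hsub (by omega) (by omega)
    omega
  have hdvd : ((k : ℤ) - 1) ∣ ((a : ℕ) : ℤ) - ((b : ℕ) : ℤ) := by
    have h1 := Int.emod_eq_emod_iff_emod_sub_eq_zero.mp (hEa ▸ hEb ▸ hEab)
    have h2 : ((a : ℤ) - c + min (ℓ : ℤ) N) - (((b : ℕ) : ℤ) - c + min (ℓ : ℤ) N)
        = ((a : ℕ) : ℤ) - ((b : ℕ) : ℤ) := by ring
    exact Int.dvd_of_emod_eq_zero (h2 ▸ h1)
  have haZ : ((a : ℕ) : ℤ) ≤ (k : ℤ) - 2 := by have := a.isLt; omega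
  have hbZ : ((b : ℕ) : ℤ) ≤ (k : ℤ) - 2 := by have := b.isLt; omega
  have := dvd_small_eq_zero (show (0 : ℤ) < (k : ℤ) - 1 by omega) hdvd
    (by have := a.isLt; have := b.isLt; omega) (by omega)
  exact hne (Fin.ext (by omega))

lemma posF_cross (hk : 3 ≤ k) (hN : 0 ≤ N) {a b : Fin (k - 1)} (ℓ : ℕ) (hne : a ≠ b) :
    posF (by omega : 0 < k) h c N a ℓ ≠ posF (by omega) h c N b (ℓ + 1) := by
  have hk0 : 0 < k := by omega
  have hkZ : (3 : ℤ) ≤ (k : ℤ) := by exact_mod_cast hk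
  rcases min_cases_succ (N := N) hN ℓ with hL | hL
  · have : posF hk0 h c N b (ℓ + 1) = posF hk0 h c N b ℓ := by
      apply Fin.ext
      simp only [posF]
      rw [posZ_succ_stay (k := k) (h := h) (c := c) hL]
    rw [this]
    exact posF_inj hk ℓ hne
  · by_cases he : (((b : ℕ) : ℤ) - c + min (ℓ : ℤ) N) % ((k : ℤ) - 1) = (k : ℤ) - 2
    · intro hEq
      have hz := posZ_succ_move (h := h) hk hL (b : ℕ) he
      have hvals : posZ k h c N (a : ℕ) ℓ = (h - min (ℓ : ℤ) N) % (k : ℤ) := by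
        rw [← posF_cast hk0 (a := a), hEq, posF_cast hk0, hz]
      set Ea := ((a : ℤ) - c + min (ℓ : ℤ) N) % ((k : ℤ) - 1) with hEa
      have hEa0 : 0 ≤ Ea := Int.emod_nonneg _ (by omega)
      have hEa1 : Ea < (k : ℤ) - 1 := Int.emod_lt_of_pos _ (by omega)
      have hsub : (k : ℤ) ∣ Ea + 1 := by
        have h1 : ((h + 1 - min (ℓ : ℤ) N + Ea) - (h - min (ℓ : ℤ) N)) % (k : ℤ) = 0 :=
          Int.emod_eq_emod_iff_emod_sub_eq_zero.mp hvals
        have h2 : (h + 1 - min (ℓ : ℤ) N + Ea) - (h - min (ℓ : ℤ) N) = Ea + 1 := by ring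
        exact Int.dvd_of_emod_eq_zero (h2 ▸ h1)
      have := dvd_small_eq_zero (show (0 : ℤ) < k by omega) hsub (by omega) (by omega)
      omega
    · have : posF hk0 h c N b (ℓ + 1) = posF hk0 h c N b ℓ := by
        apply Fin.ext
        simp only [posF]
        rw [posZ_succ_eq (h := h) hk hL (b : ℕ) he]
      rw [this]
      exact posF_inj hk ℓ hne

lemma posZ_zero (hN : 0 ≤ N) (a : ℕ) :
    posZ k h c N a 0 = (h + 1 + ((a : ℤ) - c) % ((k : ℤ) - 1)) % (k : ℤ) := by
  unfold posZ
  rw [show ((0 : ℕ) : ℤ) = 0 by norm_num, min_eq_left hN]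
  norm_num

lemma posZ_top {c₂ h₂ : ℤ} (hk : 3 ≤ k)
    (hmK : (h - N) % (k : ℤ) = h₂ % (k : ℤ))
    (hmK1 : N % ((k : ℤ) - 1) = (c - c₂) % ((k : ℤ) - 1))
    {ℓ : ℕ} (hN' : N ≤ (ℓ : ℤ)) (a : ℕ) :
    posZ k h c N a ℓ = (h₂ + 1 + ((a : ℤ) - c₂) % ((k : ℤ) - 1)) % (k : ℤ) := by
  have hkZ : (3 : ℤ) ≤ (k : ℤ) := by exact_mod_cast hk
  unfold posZ
  rw [min_eq_right hN']
  have hinner : ((a : ℤ) - c + N) % ((k : ℤ) - 1) = ((a : ℤ) - c₂) % ((k : ℤ) - 1) := by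
    rw [Int.emod_eq_emod_iff_emod_sub_eq_zero]
    have h2 : ((a : ℤ) - c + N) - ((a : ℤ) - c₂) = N - (c - c₂) := by ring
    rw [h2]
    exact Int.emod_eq_emod_iff_emod_sub_eq_zero.mp hmK1
  rw [hinner]
  rw [Int.emod_eq_emod_iff_emod_sub_eq_zero]
  have h3 : (h + 1 - N + ((a : ℤ) - c₂) % ((k : ℤ) - 1))
      - (h₂ + 1 + ((a : ℤ) - c₂) % ((k : ℤ) - 1)) = (h - N) - h₂ := by ring
  rw [h3]
  exact Int.emod_eq_emod_iff_emod_sub_eq_zero.mp hmK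



open SimpleGraph

lemma build_walk (k m : ℕ) (hm : 1 ≤ m) (pos : ℕ → Fin k)
    (hstep : ∀ ℓ, pos (ℓ + 1) = pos ℓ ∨ ((pos ℓ : ℕ) + 1) % k = (pos (ℓ + 1) : ℕ)) :
    ∀ r j : ℕ, (hj : j + r = m - 1) →
    ∃ W : (cylGrid k m).Walk (pos j, ⟨j, by omega⟩) (pos (m - 1), ⟨m - 1, by omega⟩),
      W.IsPath ∧ ∀ x ∈ W.support, j ≤ (x.2 : ℕ) ∧
        (x.1 = pos (x.2 : ℕ) ∨ x.1 = pos ((x.2 : ℕ) + 1)) := by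
  intro r
  induction r with
  | zero =>
    intro j hj
    have hjm : j = m - 1 := by omega
    subst hjm
    refine ⟨Walk.nil, Walk.IsPath.nil, ?_⟩
    intro x hx
    simp only [Walk.support_nil, List.mem_singleton] at hx
    subst hx
    exact ⟨le_refl _, Or.inl rfl⟩
  | succ r ih =>
    intro j hj
    obtain ⟨W', hP', hS'⟩ := ih (j + 1) (by omega)
    have hjlt : j < m - 1 := by omega
    by_cases hv : pos (j + 1) = pos j
    · -- vertical edge only
      have e : (cylGrid k m).Adj (pos j, ⟨j, by omega⟩) (pos (j + 1), ⟨j + 1, by omega⟩) := by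
        dsimp only [cylGrid]
        refine ⟨?_, Or.inr ⟨hv.symm, Or.inl rfl⟩⟩
        intro hcontra
        have := congrArg (fun p => ((p.2 : Fin m) : ℕ)) hcontra
        simp at this
      refine ⟨Walk.cons e W', ?_, ?_⟩
      · rw [Walk.cons_isPath_iff]
        refine ⟨hP', fun hmem => ?_⟩
        have := (hS' _ hmem).1
        simp at this
      · intro x hx
        rw [Walk.support_cons] at hx
        rcases List.mem_cons.mp hx with rfl | hx
        · exact ⟨le_refl _, Or.inl rfl⟩
        · obtain ⟨h1, h2⟩ := hS' x hx
          exact ⟨by omega, h2⟩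
    · have hmv : ((pos j : ℕ) + 1) % k = (pos (j + 1) : ℕ) := (hstep j).resolve_left hv
      have e1 : (cylGrid k m).Adj (pos j, ⟨j, by omega⟩) (pos (j + 1), ⟨j, by omega⟩) := by
        dsimp only [cylGrid]
        refine ⟨?_, Or.inl ⟨rfl, Or.inl hmv⟩⟩
        intro hcontra
        exact hv (congrArg Prod.fst hcontra).symm
      have e2 : (cylGrid k m).Adj (pos (j + 1), ⟨j, by omega⟩) (pos (j + 1), ⟨j + 1, by omega⟩) := by
        dsimp only [cylGrid]
        refine ⟨?_, Or.inr ⟨rfl, Or.inl rfl⟩⟩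
        intro hcontra
        have := congrArg (fun p => ((p.2 : Fin m) : ℕ)) hcontra
        simp at this
      refine ⟨Walk.cons e1 (Walk.cons e2 W'), ?_, ?_⟩
      · rw [Walk.cons_isPath_iff, Walk.cons_isPath_iff]
        refine ⟨⟨hP', fun hmem => ?_⟩, fun hmem => ?_⟩
        · have := (hS' _ hmem).1
          simp at this
        · rw [Walk.support_cons] at hmem
          rcases List.mem_cons.mp hmem with heq | hmem
          · exact hv (congrArg Prod.fst heq).symm
          · have := (hS' _ hmem).1
            simp at this
      · intro x hx
        rw [Walk.support_cons, Walk.support_cons] at hx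
        rcases List.mem_cons.mp hx with rfl | hx
        · exact ⟨le_refl _, Or.inl rfl⟩
        rcases List.mem_cons.mp hx with rfl | hx
        · refine ⟨le_refl _, Or.inr rfl⟩
        · obtain ⟨h1, h2⟩ := hS' x hx
          exact ⟨by omega, h2⟩


end CylAux

open SimpleGraph in
/-- In `C_k^m` with `k ≥ 3` and `m ≥ k²`, if `s₁,…,s_{k-1}` lie in clockwise cyclic order
on the innermost cycle and `t₁,…,t_{k-1}` in clockwise cyclic order on the outermost
cycle, then the pairs `(s_i,t_i)` are linked by pairwise vertex-disjoint paths. -/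
theorem stmt7 (k m : ℕ) (hk : 3 ≤ k) (hm : k * k ≤ m)
    (s t : Fin (k - 1) → Fin k)
    (hs : Function.Injective s) (ht : Function.Injective t)
    (hcs : InCwCyclicOrder k (k - 1) s) (hct : InCwCyclicOrder k (k - 1) t) :
    ∃ P : ∀ a : Fin (k - 1),
        (cylGrid k m).Walk (s a, ⟨0, by have h9 := Nat.mul_le_mul hk hk; omega⟩)
          (t a, ⟨m - 1, by have h9 := Nat.mul_le_mul hk hk; omega⟩),
      (∀ a, (P a).IsPath) ∧
        ∀ a b, a ≠ b → ∀ x, x ∈ (P a).support → x ∉ (P b).support := by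
  have hkk := Nat.mul_le_mul hk hk
  have hm1 : 1 ≤ m := by omega
  have hk0 : 0 < k := by omega
  have hkZ : (3 : ℤ) ≤ (k : ℤ) := by exact_mod_cast hk
  obtain ⟨h₁, c₁, hp1⟩ := CylAux.exists_param hk s hcs
  obtain ⟨h₂, c₂, hp2⟩ := CylAux.exists_param hk t hct
  set x : ℤ := (h₁ - h₂) % (k : ℤ) with hxdef
  set y : ℤ := (c₁ - c₂ - x) % ((k : ℤ) - 1) with hydef
  set N : ℤ := x + (k : ℤ) * y with hNdef
  have hx0 : 0 ≤ x := Int.emod_nonneg _ (by omega)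
  have hx1 : x < (k : ℤ) := Int.emod_lt_of_pos _ (by omega)
  have hy0 : 0 ≤ y := Int.emod_nonneg _ (by omega)
  have hy1 : y < (k : ℤ) - 1 := Int.emod_lt_of_pos _ (by omega)
  have hN0 : 0 ≤ N := by
    have : 0 ≤ (k : ℤ) * y := mul_nonneg (by omega) hy0
    omega
  have hNm : N ≤ (m : ℤ) - 1 := by
    have h1 : (k : ℤ) * y ≤ (k : ℤ) * ((k : ℤ) - 2) :=
      mul_le_mul_of_nonneg_left (by omega) (by omega)
    have h2 : ((k * k : ℕ) : ℤ) ≤ (m : ℤ) := by exact_mod_cast hm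
    push_cast at h2
    have h3 : (k : ℤ) * ((k : ℤ) - 2) = (k : ℤ) * (k : ℤ) - 2 * (k : ℤ) := by ring
    omega
  have hmodK : (h₁ - N) % (k : ℤ) = h₂ % (k : ℤ) := by
    rw [Int.emod_eq_emod_iff_emod_sub_eq_zero]
    apply Int.emod_eq_zero_of_dvd
    have d1 : (k : ℤ) ∣ (h₁ - h₂) - x := Int.dvd_self_sub_of_emod_eq hxdef.symm
    have h4 : (h₁ - N) - h₂ = ((h₁ - h₂) - x) - (k : ℤ) * y := by rw [hNdef]; ring
    rw [h4]
    exact dvd_sub d1 ⟨y, rfl⟩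
  have hmodK1 : N % ((k : ℤ) - 1) = (c₁ - c₂) % ((k : ℤ) - 1) := by
    rw [Int.emod_eq_emod_iff_emod_sub_eq_zero]
    apply Int.emod_eq_zero_of_dvd
    have d2 : ((k : ℤ) - 1) ∣ (c₁ - c₂ - x) - y := Int.dvd_self_sub_of_emod_eq hydef.symm
    have h4 : N - (c₁ - c₂) = ((k : ℤ) - 1) * y - ((c₁ - c₂ - x) - y) := by rw [hNdef]; ring
    rw [h4]
    exact dvd_sub ⟨y, rfl⟩ d2
  set pos : Fin (k - 1) → ℕ → Fin k := fun a ℓ => CylAux.posF hk0 h₁ c₁ N a ℓ with hposdef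
  have hzero : ∀ a, pos a 0 = s a := by
    intro a
    apply Fin.ext
    have h1 : ((pos a 0 : ℕ) : ℤ) = ((s a : ℕ) : ℤ) := by
      rw [hposdef]
      rw [CylAux.posF_cast hk0, CylAux.posZ_zero hN0, hp1 a]
    exact_mod_cast h1
  have htopm : ∀ a, pos a (m - 1) = t a := by
    intro a
    apply Fin.ext
    have hcast : (((m - 1 : ℕ)) : ℤ) = (m : ℤ) - 1 := by
      have : (1 : ℕ) ≤ m := hm1
      push_cast [Nat.cast_sub this]
      ring
    have h1 : ((pos a (m - 1) : ℕ) : ℤ) = ((t a : ℕ) : ℤ) := by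
      rw [hposdef]
      rw [CylAux.posF_cast hk0,
        CylAux.posZ_top hk hmodK hmodK1 (by rw [hcast]; exact hNm) (a : ℕ), hp2 a]
    exact_mod_cast h1
  have hstep : ∀ a ℓ, pos a (ℓ + 1) = pos a ℓ ∨
      ((pos a ℓ : ℕ) + 1) % k = (pos a (ℓ + 1) : ℕ) := by
    intro a ℓ
    exact CylAux.posF_step hk hN0 a ℓ
  have hdisj : ∀ (ℓ : ℕ) (a b : Fin (k - 1)), a ≠ b →
      pos a ℓ ≠ pos b ℓ ∧ pos a ℓ ≠ pos b (ℓ + 1) := by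
    intro ℓ a b hne
    exact ⟨CylAux.posF_inj hk ℓ hne, CylAux.posF_cross hk hN0 ℓ hne⟩
  have hbuild := fun a => CylAux.build_walk k m hm1 (pos a) (hstep a) (m - 1) 0 (by omega)
  choose W hWpath hWsupp using hbuild
  refine ⟨fun a => (W a).copy (by rw [hzero a]) (by rw [htopm a]), ?_, ?_⟩
  · intro a
    rw [Walk.isPath_copy]
    exact hWpath a
  · intro a b hab xv hxa hxb
    rw [Walk.support_copy] at hxa hxb
    obtain ⟨-, hca⟩ := hWsupp a xv hxa
    obtain ⟨-, hcb⟩ := hWsupp b xv hxb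
    rcases hca with ha | ha <;> rcases hcb with hb | hb
    · exact (hdisj _ a b hab).1 (by rw [← ha, ← hb])
    · exact (hdisj _ a b hab).2 (by rw [← ha, ← hb])
    · exact (hdisj _ b a hab.symm).2 (by rw [← ha, ← hb])
    · exact (hdisj _ a b hab).1 (by rw [← ha, ← hb])
end

section
/- Let I be a circle in the plane and X ⊆ I a finite set of k points. Then there exists a plane graph H on at most k² vertices, properly embedded in the closed disc bounded by I, with H ∩ I = X, such that every cross-free set of disjoint pairs 𝒯 ⊆ X² is realizable in H (i.e., admits a family of vertex-disjoint paths connecting each pair). Concretely, for k ≥ 3 the (k,k)-cylindrical grid with its outer cycle identified with X has this property. -/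
open SimpleGraph

variable {V : Type}

/-- A drawing of the graph `G` in the plane (identified with `ℂ`): vertices are distinct
points and each edge is a simple curve between its endpoints; distinct edges meet only at
common endpoints, and the interior of an edge avoids all vertex points. -/
structure PlaneEmb (G : SimpleGraph V) where
  pos : V → ℂ
  pos_inj : Function.Injective pos
  curve : (u v : V) → G.Adj u v → ℝ → ℂ
  curve_cont : ∀ u v h, ContinuousOn (curve u v h) (Set.Icc 0 1)
  curve_zero : ∀ u v h, curve u v h 0 = pos u
  curve_one : ∀ u v h, curve u v h 1 = pos v
  curve_injOn : ∀ u v h, Set.InjOn (curve u v h) (Set.Icc 0 1)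
  curve_symm : ∀ u v (h : G.Adj u v) (t : ℝ), curve v u h.symm t = curve u v h (1 - t)
  curve_avoid : ∀ u v (h : G.Adj u v), ∀ t ∈ Set.Ioo (0:ℝ) 1, ∀ w, curve u v h t ≠ pos w
  curve_disjoint : ∀ u v (h : G.Adj u v), ∀ u' v' (h' : G.Adj u' v'), s(u, v) ≠ s(u', v') →
    ∀ t ∈ Set.Ioo (0:ℝ) 1, ∀ t' ∈ Set.Ioo (0:ℝ) 1, curve u v h t ≠ curve u' v' h' t'

namespace PlaneEmb

variable {G : SimpleGraph V}

/-- The subset of the plane covered by the drawing of `G`. -/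
def image (emb : PlaneEmb G) : Set ℂ :=
  Set.range emb.pos ∪ ⋃ (u : V) (v : V) (h : G.Adj u v), emb.curve u v h '' Set.Icc 0 1

/-- The subset of the plane covered by the drawing of a walk. -/
def walkImage (emb : PlaneEmb G) {u v : V} (p : G.Walk u v) : Set ℂ :=
  {emb.pos u} ∪ ⋃ d ∈ p.darts, emb.curve d.toProd.1 d.toProd.2 d.adj '' Set.Icc 0 1

end PlaneEmb

/-- The disc of a subset `S` of the plane:  `S` together with all bounded connected
components of its complement. -/
def discOf (S : Set ℂ) : Set ℂ :=
  S ∪ {z | z ∉ S ∧ Bornology.IsBounded (connectedComponentIn Sᶜ z)}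

/-- Four points on the unit circle appear in this cyclic order (witnessed by increasing
angles spanning less than a full turn). -/
def CyclicallyOrdered (z₁ z₂ z₃ z₄ : ℂ) : Prop :=
  ∃ a₁ a₂ a₃ a₄ : ℝ, a₁ < a₂ ∧ a₂ < a₃ ∧ a₃ < a₄ ∧ a₄ < a₁ + 2 * Real.pi ∧
    z₁ = Complex.exp (Complex.I * (a₁ : ℂ)) ∧ z₂ = Complex.exp (Complex.I * (a₂ : ℂ)) ∧
    z₃ = Complex.exp (Complex.I * (a₃ : ℂ)) ∧ z₄ = Complex.exp (Complex.I * (a₄ : ℂ))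

/-- The pairs in `T` (given as pairs of indices of the boundary points `x`) are pairwise
disjoint. -/
def DisjointPairsIdx {k : ℕ} (T : Finset (Fin k × Fin k)) : Prop :=
  (∀ p ∈ T, p.1 ≠ p.2) ∧
    ∀ p ∈ T, ∀ q ∈ T, p ≠ q → p.1 ≠ q.1 ∧ p.1 ≠ q.2 ∧ p.2 ≠ q.1 ∧ p.2 ≠ q.2

/-- `T` is cross-free with respect to the boundary points `x`: no two of its pairs
interleave on the circle. -/
def CrossFree {k : ℕ} (x : Fin k → ℂ) (T : Finset (Fin k × Fin k)) : Prop :=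
  ¬ ∃ p ∈ T, ∃ q ∈ T, p ≠ q ∧ CyclicallyOrdered (x p.1) (x q.1) (x p.2) (x q.2)

open Complex Set

namespace Stmt15
noncomputable def pt (s φ : ℝ) : ℂ := (s : ℂ) * Complex.exp ((φ : ℂ) * Complex.I)

open Complex Set

lemma abs_pt {s : ℝ} (hs : 0 ≤ s) (φ : ℝ) : ‖pt s φ‖ = s := by
  simp [pt, map_mul, Complex.norm_exp_ofReal_mul_I, _root_.abs_of_nonneg hs]

lemma arg_pt {s : ℝ} (hs : 0 < s) {φ : ℝ} (hφ : φ ∈ Set.Ioc (-Real.pi) Real.pi) :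
    (pt s φ).arg = φ := by
  rw [pt, Complex.arg_real_mul _ hs, Complex.exp_mul_I, Complex.arg_cos_add_sin_mul_I hφ]

lemma pt_inj {s s' : ℝ} (hs : 0 < s) (hs' : 0 < s') {φ φ' : ℝ}
    (hφ : φ ∈ Set.Ioc (-Real.pi) Real.pi) (hφ' : φ' ∈ Set.Ioc (-Real.pi) Real.pi)
    (h : pt s φ = pt s' φ') : s = s' ∧ φ = φ' := by
  constructor
  · have := congrArg (‖·‖) h
    rwa [abs_pt hs.le, abs_pt hs'.le] at this
  · have := congrArg Complex.arg h
    rwa [arg_pt hs hφ, arg_pt hs' hφ'] at this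

lemma combo_mem {a b : ℝ} (hab : a ≠ b) {t : ℝ} (ht : t ∈ Set.Ioo (0:ℝ) 1) :
    min a b < (1-t)*a + t*b ∧ (1-t)*a + t*b < max a b := by
  obtain ⟨ht0, ht1⟩ := ht
  rcases lt_or_gt_of_ne hab with h | h
  · rw [min_eq_left h.le, max_eq_right h.le]; constructor <;> nlinarith
  · rw [min_eq_right h.le, max_eq_left h.le]; constructor <;> nlinarith

lemma combo_mem_Icc {a b : ℝ} {t : ℝ} (ht : t ∈ Set.Icc (0:ℝ) 1) :
    min a b ≤ (1-t)*a + t*b ∧ (1-t)*a + t*b ≤ max a b := by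
  obtain ⟨ht0, ht1⟩ := ht
  rcases le_total a b with h | h
  · rw [min_eq_left h, max_eq_right h]; constructor <;> nlinarith
  · rw [min_eq_right h, max_eq_left h]; constructor <;> nlinarith

lemma exists_path_ofFn {V : Type} {G : SimpleGraph V} (f : ℕ → V) :
    ∀ m : ℕ, (∀ i < m, G.Adj (f i) (f (i+1))) →
      (∀ i ≤ m, ∀ j ≤ m, f i = f j → i = j) →
      ∃ p : G.Walk (f 0) (f m), p.IsPath ∧ ∀ w, w ∈ p.support ↔ ∃ i ≤ m, f i = w := by
  intro m
  induction m with
  | zero =>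
    intro _ _
    exact ⟨SimpleGraph.Walk.nil, SimpleGraph.Walk.IsPath.nil, by simp [eq_comm]⟩
  | succ m ih =>
    intro hadj hinj
    obtain ⟨p, hp, hsupp⟩ := ih (fun i hi => hadj i (by omega))
      (fun i hi j hj h => hinj i (by omega) j (by omega) h)
    refine ⟨p.concat (hadj m (by omega)), ?_, ?_⟩
    · rw [SimpleGraph.Walk.isPath_def, SimpleGraph.Walk.support_concat]
      rw [List.nodup_append']
      refine ⟨hp.support_nodup, List.nodup_singleton _, ?_⟩
      intro w hw hw'
      rw [List.mem_singleton] at hw'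
      subst hw'
      obtain ⟨i, hi, hfi⟩ := (hsupp _).1 hw
      have := hinj i (by omega) (m+1) le_rfl hfi
      omega
    · intro w
      rw [SimpleGraph.Walk.support_concat, List.mem_append,
        List.mem_singleton, hsupp]
      constructor
      · rintro (⟨i, hi, rfl⟩ | rfl)
        · exact ⟨i, by omega, rfl⟩
        · exact ⟨m+1, le_rfl, rfl⟩
      · rintro ⟨i, hi, rfl⟩
        rcases Nat.lt_or_ge i (m+1) with h | h
        · exact Or.inl ⟨i, by omega, rfl⟩
        · right; congr 1; omega


variable (k : ℕ) (x : Fin k → ℂ)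

/-- radius of level j -/
noncomputable def rad (j : ℕ) : ℝ := 1 - (j : ℝ) / k

noncomputable def θf : Fin k → ℝ := fun i => (x i).arg
noncomputable def σp : Equiv.Perm (Fin k) := Tuple.sort (θf k x)
noncomputable def θs : Fin k → ℝ := fun i => θf k x (σp k x i)

noncomputable def ee : Fin (k*k) ≃ Fin k × Fin k := finProdFinEquiv.symm
noncomputable def vtx (c l : Fin k) : Fin (k*k) := (ee k).symm (c, l)

@[simp] lemma ee_vtx (c l : Fin k) : ee k (vtx k c l) = (c, l) := by
  simp [vtx]

lemma vtx_inj {c l c' l' : Fin k} (h : vtx k c l = vtx k c' l') : c = c' ∧ l = l' := by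
  have := congrArg (ee k) h
  simp [vtx] at this
  exact this

lemma vtx_surj (a : Fin (k*k)) : a = vtx k (ee k a).1 (ee k a).2 := by
  simp [vtx]

def GG : SimpleGraph (Fin (k*k)) where
  Adj a b :=
    (((ee k a).1 : ℕ) = ((ee k b).1 : ℕ) ∧
      (((ee k a).2 : ℕ) + 1 = ((ee k b).2 : ℕ) ∨ ((ee k b).2 : ℕ) + 1 = ((ee k a).2 : ℕ))) ∨
    (((ee k a).2 : ℕ) = ((ee k b).2 : ℕ) ∧ 1 ≤ ((ee k a).2 : ℕ) ∧
      (((ee k a).1 : ℕ) + 1 = ((ee k b).1 : ℕ) ∨ ((ee k b).1 : ℕ) + 1 = ((ee k a).1 : ℕ)))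
  symm := by constructor; intro a b h; omega
  loopless := by constructor; intro a h; omega

noncomputable def posf : Fin (k*k) → ℂ :=
  fun a => pt (rad k ((ee k a).2 : ℕ)) (θs k x ((ee k a).1))

noncomputable def curvef (a b : Fin (k*k)) (t : ℝ) : ℂ :=
  if ((ee k a).1 : ℕ) = ((ee k b).1 : ℕ) then
    pt ((1-t) * rad k ((ee k a).2 : ℕ) + t * rad k ((ee k b).2 : ℕ)) (θs k x ((ee k a).1))
  else
    pt (rad k ((ee k a).2 : ℕ)) ((1-t) * θs k x ((ee k a).1) + t * θs k x ((ee k b).1))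

/- rad facts -/
lemma rad_zero : rad k 0 = 1 := by simp [rad]

lemma rad_lt_rad_iff (hk : 0 < k) {i j : ℕ} : rad k i < rad k j ↔ j < i := by
  have hk' : (0:ℝ) < k := by exact_mod_cast hk
  simp only [rad, sub_lt_sub_iff_left, div_lt_div_iff_of_pos_right hk', Nat.cast_lt]

lemma rad_le_one (j : ℕ) : rad k j ≤ 1 := by
  have : (0:ℝ) ≤ (j:ℝ)/k := by positivity
  simp only [rad]; linarith

lemma rad_pos (hk : 0 < k) {j : ℕ} (hj : j < k) : 0 < rad k j := by
  have hk' : (0:ℝ) < k := by exact_mod_cast hk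
  have : (j:ℝ) < k := by exact_mod_cast hj
  simp only [rad]
  rw [sub_pos, div_lt_one hk']
  exact this

lemma rad_inj (hk : 0 < k) {i j : ℕ} (h : rad k i = rad k j) : i = j := by
  rcases Nat.lt_trichotomy i j with hl | he | hl
  · exact absurd h (ne_of_gt ((rad_lt_rad_iff k hk).mpr hl))
  · exact he
  · exact absurd h (ne_of_lt ((rad_lt_rad_iff k hk).mpr hl))


/- θ facts -/
variable {k x}

lemma x_eq_pt (hcirc : ∀ i, ‖x i‖ = 1) (i : Fin k) : x i = pt 1 (θf k x i) := by
  have := Complex.norm_mul_exp_arg_mul_I (x i)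
  rw [hcirc i] at this
  simpa [pt, θf] using this.symm

lemma θf_mem (i : Fin k) : θf k x i ∈ Set.Ioc (-Real.pi) Real.pi := Complex.arg_mem_Ioc _

lemma θs_mem (i : Fin k) : θs k x i ∈ Set.Ioc (-Real.pi) Real.pi := Complex.arg_mem_Ioc _

lemma θf_inj (hx : Function.Injective x) (hcirc : ∀ i, ‖x i‖ = 1) :
    Function.Injective (θf k x) := by
  intro i j h
  apply hx
  rw [x_eq_pt hcirc i, x_eq_pt hcirc j, h]

lemma θs_strictMono (hx : Function.Injective x) (hcirc : ∀ i, ‖x i‖ = 1) :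
    StrictMono (θs k x) := by
  apply Monotone.strictMono_of_injective (Tuple.monotone_sort (θf k x))
  exact Function.Injective.comp (θf_inj hx hcirc) (Equiv.injective _)

lemma θs_lt_iff (hx : Function.Injective x) (hcirc : ∀ i, ‖x i‖ = 1)
    {i j : Fin k} : θs k x i < θs k x j ↔ i < j :=
  (θs_strictMono hx hcirc).lt_iff_lt

lemma θs_inj (hx : Function.Injective x) (hcirc : ∀ i, ‖x i‖ = 1) :
    Function.Injective (θs k x) := (θs_strictMono hx hcirc).injective

/- adjacency shapes -/
lemma adj_cases {a b : Fin (k*k)} (h : (GG k).Adj a b) :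
    (((ee k a).1 : ℕ) = ((ee k b).1 : ℕ) ∧
      (((ee k a).2 : ℕ) + 1 = ((ee k b).2 : ℕ) ∨ ((ee k b).2 : ℕ) + 1 = ((ee k a).2 : ℕ))) ∨
    (((ee k a).2 : ℕ) = ((ee k b).2 : ℕ) ∧ 1 ≤ ((ee k a).2 : ℕ) ∧ ((ee k a).1 : ℕ) ≠ ((ee k b).1 : ℕ) ∧
      (((ee k a).1 : ℕ) + 1 = ((ee k b).1 : ℕ) ∨ ((ee k b).1 : ℕ) + 1 = ((ee k a).1 : ℕ))) := by
  rcases h with h | h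
  · exact Or.inl h
  · exact Or.inr ⟨h.1, h.2.1, by omega, h.2.2⟩


lemma pt_congr {s s' φ φ' : ℝ} (h1 : s = s') (h2 : φ = φ') : pt s φ = pt s' φ' := by rw [h1, h2]

lemma vert_eq_iff {a b : Fin (k*k)} :
    a = b ↔ (((ee k a).1 : ℕ) = ((ee k b).1 : ℕ) ∧ ((ee k a).2 : ℕ) = ((ee k b).2 : ℕ)) := by
  constructor
  · rintro rfl; exact ⟨rfl, rfl⟩
  · rintro ⟨h1, h2⟩
    apply (ee k).injective
    exact Prod.ext (Fin.ext h1) (Fin.ext h2)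

lemma rad_band_unique (hk : 0 < k) {m m' : ℕ} {s : ℝ} (h1 : rad k (m+1) < s) (h2 : s < rad k m)
    (h3 : rad k (m'+1) < s) (h4 : s < rad k m') : m = m' := by
  by_contra hne
  rcases Nat.lt_or_ge m m' with h | h
  · have : rad k m' ≤ rad k (m+1) := by
      rcases Nat.eq_or_lt_of_le (Nat.succ_le_of_lt h) with he | hl
      · rw [show m + 1 = m' by omega]
      · exact ((rad_lt_rad_iff k hk).mpr hl).le
    linarith
  · have hlt : m' < m := by omega
    have : rad k m ≤ rad k (m'+1) := by
      rcases Nat.eq_or_lt_of_le (Nat.succ_le_of_lt hlt) with he | hl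
      · rw [show m' + 1 = m by omega]
      · exact ((rad_lt_rad_iff k hk).mpr hl).le
    linarith

lemma rad_notin_band (hk : 0 < k) {m lw : ℕ} {s : ℝ} (h1 : rad k (m+1) < s) (h2 : s < rad k m)
    (h3 : rad k lw = s) : False := by
  have ha : m < lw := (rad_lt_rad_iff k hk).mp (h3 ▸ h2)
  have hb : lw < m + 1 := (rad_lt_rad_iff k hk).mp (h3 ▸ h1)
  omega

lemma rad_band_loc (hk : 0 < k) {lu lv : ℕ} (hadj : lu + 1 = lv ∨ lv + 1 = lu) (hlu : lu < k)
    (hlv : lv < k) {s : ℝ} (h1 : min (rad k lu) (rad k lv) < s) (h2 : s < max (rad k lu) (rad k lv)) :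
    ∃ m, rad k (m+1) < s ∧ s < rad k m ∧ ((m = lu ∧ m+1 = lv) ∨ (m = lv ∧ m+1 = lu)) := by
  rcases hadj with h | h
  · refine ⟨lu, ?_, ?_, Or.inl ⟨rfl, h⟩⟩
    · rw [h]
      have : rad k lv < rad k lu := (rad_lt_rad_iff k hk).mpr (by omega)
      rw [min_eq_right this.le] at h1; exact h1
    · have : rad k lv < rad k lu := (rad_lt_rad_iff k hk).mpr (by omega)
      rw [max_eq_left this.le] at h2; exact h2
  · refine ⟨lv, ?_, ?_, Or.inr ⟨rfl, h⟩⟩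
    · rw [h]
      have : rad k lu < rad k lv := (rad_lt_rad_iff k hk).mpr (by omega)
      rw [min_eq_left this.le] at h1; exact h1
    · have : rad k lu < rad k lv := (rad_lt_rad_iff k hk).mpr (by omega)
      rw [max_eq_right this.le] at h2; exact h2

lemma circ_band_loc (hx : Function.Injective x) (hcirc : ∀ i, ‖x i‖ = 1)
    {cu cv : Fin k} (hadj : (cu:ℕ) + 1 = (cv:ℕ) ∨ (cv:ℕ) + 1 = (cu:ℕ)) {φ : ℝ}
    (h1 : min (θs k x cu) (θs k x cv) < φ) (h2 : φ < max (θs k x cu) (θs k x cv)) :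
    ∃ c1 c2 : Fin k, (c1:ℕ) + 1 = (c2:ℕ) ∧ θs k x c1 < φ ∧ φ < θs k x c2 ∧
      ((c1 = cu ∧ c2 = cv) ∨ (c1 = cv ∧ c2 = cu)) := by
  rcases hadj with h | h
  · have hlt : θs k x cu < θs k x cv := (θs_lt_iff hx hcirc).mpr (Fin.lt_def.mpr (by omega))
    rw [min_eq_left hlt.le] at h1
    rw [max_eq_right hlt.le] at h2
    exact ⟨cu, cv, h, h1, h2, Or.inl ⟨rfl, rfl⟩⟩
  · have hlt : θs k x cv < θs k x cu := (θs_lt_iff hx hcirc).mpr (Fin.lt_def.mpr (by omega))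
    rw [min_eq_right hlt.le] at h1
    rw [max_eq_left hlt.le] at h2
    exact ⟨cv, cu, h, h1, h2, Or.inr ⟨rfl, rfl⟩⟩

lemma band_eq (hx : Function.Injective x) (hcirc : ∀ i, ‖x i‖ = 1)
    {c1 c2 d1 d2 : Fin k} (h12 : (c1:ℕ) + 1 = (c2:ℕ)) (h34 : (d1:ℕ) + 1 = (d2:ℕ)) {φ : ℝ}
    (h1 : θs k x c1 < φ) (h2 : φ < θs k x c2) (h3 : θs k x d1 < φ) (h4 : φ < θs k x d2) :
    c1 = d1 := by
  by_contra hne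
  have hmono := θs_strictMono hx hcirc
  rcases Fin.lt_or_lt_of_ne hne with h | h
  · have : c2 ≤ d1 := Fin.le_def.mpr (by have := Fin.lt_def.mp h; omega)
    have := hmono.monotone this
    linarith
  · have : d2 ≤ c1 := Fin.le_def.mpr (by have := Fin.lt_def.mp h; omega)
    have := hmono.monotone this
    linarith

lemma θs_notin_band (hx : Function.Injective x) (hcirc : ∀ i, ‖x i‖ = 1)
    {c1 c2 cw : Fin k} (h12 : (c1:ℕ) + 1 = (c2:ℕ)) {φ : ℝ}
    (h1 : θs k x c1 < φ) (h2 : φ < θs k x c2) (h3 : θs k x cw = φ) : False := by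
  have ha : c1 < cw := (θs_lt_iff hx hcirc).mp (h3 ▸ h1)
  have hb : cw < c2 := (θs_lt_iff hx hcirc).mp (h3 ▸ h2)
  have := Fin.lt_def.mp ha
  have := Fin.lt_def.mp hb
  omega


section Fields
variable (hx : Function.Injective x) (hcirc : ∀ i, ‖x i‖ = 1)

lemma hk_of (a : Fin (k*k)) : 0 < k := by
  rcases Nat.eq_zero_or_pos k with rfl | h
  · exact absurd a.pos (by simp)
  · exact h

include hx hcirc in
lemma posf_inj : Function.Injective (posf k x) := by
  intro a b h
  have hk : 0 < k := hk_of a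
  unfold posf at h
  obtain ⟨hs, hφ⟩ := pt_inj (rad_pos k hk (Fin.is_lt _)) (rad_pos k hk (Fin.is_lt _))
    (θs_mem _) (θs_mem _) h
  rw [vert_eq_iff]
  exact ⟨congrArg Fin.val (θs_inj hx hcirc hφ), congrArg Fin.val (Fin.ext (rad_inj k hk hs) : ((ee k a).2 = (ee k b).2))⟩

lemma curvef_cont (a b : Fin (k*k)) : ContinuousOn (curvef k x a b) (Set.Icc 0 1) := by
  apply Continuous.continuousOn
  unfold curvef pt
  split_ifs
  · fun_prop
  · fun_prop

lemma curvef_zero (a b : Fin (k*k)) : curvef k x a b 0 = posf k x a := by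
  unfold curvef posf
  split_ifs <;> apply pt_congr <;> ring

lemma curvef_one {a b : Fin (k*k)} (h : (GG k).Adj a b) : curvef k x a b 1 = posf k x b := by
  rcases adj_cases h with ⟨hc, _⟩ | ⟨hl, _, hcne, _⟩
  · rw [curvef, if_pos hc, posf]
    apply pt_congr
    · ring
    · rw [show (ee k a).1 = (ee k b).1 from Fin.ext hc]
  · rw [curvef, if_neg hcne, posf]
    apply pt_congr
    · rw [show (ee k a).2 = (ee k b).2 from Fin.ext hl]
    · ring

lemma curvef_symm {a b : Fin (k*k)} (h : (GG k).Adj a b) (t : ℝ) :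
    curvef k x b a t = curvef k x a b (1 - t) := by
  rcases adj_cases h with ⟨hc, _⟩ | ⟨hl, _, hcne, _⟩
  · rw [curvef, if_pos hc.symm, curvef, if_pos hc]
    apply pt_congr
    · ring
    · rw [show (ee k a).1 = (ee k b).1 from Fin.ext hc]
  · rw [curvef, if_neg (Ne.symm hcne), curvef, if_neg hcne]
    apply pt_congr
    · rw [show (ee k a).2 = (ee k b).2 from Fin.ext hl]
    · ring

include hx hcirc in
lemma curvef_injOn {a b : Fin (k*k)} (h : (GG k).Adj a b) :
    Set.InjOn (curvef k x a b) (Set.Icc 0 1) := by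
  intro t ht t' ht' heq
  have hk : 0 < k := hk_of a
  have hla : ((ee k a).2 : ℕ) < k := Fin.is_lt _
  have hlb : ((ee k b).2 : ℕ) < k := Fin.is_lt _
  rcases adj_cases h with ⟨hc, hl⟩ | ⟨hl, hl1, hcne, _⟩
  · rw [curvef, if_pos hc, curvef, if_pos hc] at heq
    have hrne : rad k ((ee k a).2 : ℕ) ≠ rad k ((ee k b).2 : ℕ) := by
      intro hcon; exact absurd (rad_inj k hk hcon) (by omega)
    have hmin : 0 < min (rad k ((ee k a).2 : ℕ)) (rad k ((ee k b).2 : ℕ)) :=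
      lt_min (rad_pos k hk hla) (rad_pos k hk hlb)
    obtain ⟨hm1, _⟩ := combo_mem_Icc (a := rad k ((ee k a).2 : ℕ))
      (b := rad k ((ee k b).2 : ℕ)) ht
    obtain ⟨hm1', _⟩ := combo_mem_Icc (a := rad k ((ee k a).2 : ℕ))
      (b := rad k ((ee k b).2 : ℕ)) ht'
    obtain ⟨hs, _⟩ := pt_inj (by linarith) (by linarith) (θs_mem _) (θs_mem _) heq
    have key : (t - t') * (rad k ((ee k b).2 : ℕ) - rad k ((ee k a).2 : ℕ)) = 0 := by
      linear_combination hs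
    rcases mul_eq_zero.mp key with h0 | h0
    · linarith
    · exact absurd (by linarith : rad k ((ee k a).2 : ℕ) = rad k ((ee k b).2 : ℕ)) hrne
  · rw [curvef, if_neg hcne, curvef, if_neg hcne] at heq
    have hθne : θs k x (ee k a).1 ≠ θs k x (ee k b).1 := by
      intro hcon; exact hcne (congrArg Fin.val (θs_inj hx hcirc hcon))
    have hIoc : ∀ u : ℝ, u ∈ Set.Icc (0:ℝ) 1 →
        (1-u) * θs k x (ee k a).1 + u * θs k x (ee k b).1 ∈ Set.Ioc (-Real.pi) Real.pi := by
      intro u hu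
      obtain ⟨c1, c2⟩ := combo_mem_Icc (a := θs k x (ee k a).1) (b := θs k x (ee k b).1) hu
      constructor
      · have := lt_min (θs_mem (x := x) (ee k a).1).1 (θs_mem (x := x) (ee k b).1).1
        linarith
      · have := max_le (θs_mem (x := x) (ee k a).1).2 (θs_mem (x := x) (ee k b).1).2
        linarith
    obtain ⟨_, hφ⟩ := pt_inj (rad_pos k hk hla) (rad_pos k hk hla) (hIoc t ht) (hIoc t' ht') heq
    have key : (t - t') * (θs k x (ee k b).1 - θs k x (ee k a).1) = 0 := by
      linear_combination hφ
    rcases mul_eq_zero.mp key with h0 | h0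
    · linarith
    · exact absurd (by linarith : θs k x (ee k a).1 = θs k x (ee k b).1) hθne


include hx hcirc in
lemma curvef_avoid {a b : Fin (k*k)} (h : (GG k).Adj a b) {t : ℝ} (ht : t ∈ Set.Ioo (0:ℝ) 1)
    (w : Fin (k*k)) : curvef k x a b t ≠ posf k x w := by
  intro heq
  have hk : 0 < k := hk_of a
  have hla : ((ee k a).2 : ℕ) < k := Fin.is_lt _
  have hlb : ((ee k b).2 : ℕ) < k := Fin.is_lt _
  have hlw : ((ee k w).2 : ℕ) < k := Fin.is_lt _
  rcases adj_cases h with ⟨hc, hl⟩ | ⟨hl, hl1, hcne, hcadj⟩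
  · rw [curvef, if_pos hc, posf] at heq
    have hrne : rad k ((ee k a).2 : ℕ) ≠ rad k ((ee k b).2 : ℕ) := by
      intro hcon; exact absurd (rad_inj k hk hcon) (by omega)
    obtain ⟨hm1, hm2⟩ := combo_mem (a := rad k ((ee k a).2 : ℕ))
      (b := rad k ((ee k b).2 : ℕ)) hrne ht
    have hmin : 0 < min (rad k ((ee k a).2 : ℕ)) (rad k ((ee k b).2 : ℕ)) :=
      lt_min (rad_pos k hk hla) (rad_pos k hk hlb)
    obtain ⟨hs, _⟩ := pt_inj (by linarith) (rad_pos k hk hlw) (θs_mem _) (θs_mem _) heq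
    obtain ⟨m, hb1, hb2, _⟩ := rad_band_loc hk hl hla hlb hm1 hm2
    exact rad_notin_band hk hb1 hb2 hs.symm
  · rw [curvef, if_neg hcne, posf] at heq
    have hθne : θs k x (ee k a).1 ≠ θs k x (ee k b).1 := by
      intro hcon; exact hcne (congrArg Fin.val (θs_inj hx hcirc hcon))
    obtain ⟨hm1, hm2⟩ := combo_mem (a := θs k x (ee k a).1) (b := θs k x (ee k b).1) hθne ht
    have hmem : (1-t) * θs k x (ee k a).1 + t * θs k x (ee k b).1 ∈
        Set.Ioc (-Real.pi) Real.pi := by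
      constructor
      · have := lt_min (θs_mem (x := x) (ee k a).1).1 (θs_mem (x := x) (ee k b).1).1
        linarith
      · have h1 := max_le (θs_mem (x := x) (ee k a).1).2 (θs_mem (x := x) (ee k b).1).2
        linarith
    obtain ⟨_, hφ⟩ := pt_inj (rad_pos k hk hla) (rad_pos k hk hlw) hmem (θs_mem _) heq
    obtain ⟨c1, c2, h12, hb1, hb2, _⟩ := circ_band_loc hx hcirc hcadj hm1 hm2
    exact θs_notin_band hx hcirc h12 hb1 hb2 hφ.symm

include hx hcirc in
lemma curvef_disjoint {a b : Fin (k*k)} (h : (GG k).Adj a b) {a' b' : Fin (k*k)}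
    (h' : (GG k).Adj a' b') (hne : s(a, b) ≠ s(a', b'))
    {t : ℝ} (ht : t ∈ Set.Ioo (0:ℝ) 1) {t' : ℝ} (ht' : t' ∈ Set.Ioo (0:ℝ) 1) :
    curvef k x a b t ≠ curvef k x a' b' t' := by
  intro heq
  have hk : 0 < k := hk_of a
  have hla : ((ee k a).2 : ℕ) < k := Fin.is_lt _
  have hlb : ((ee k b).2 : ℕ) < k := Fin.is_lt _
  have hla' : ((ee k a').2 : ℕ) < k := Fin.is_lt _
  have hlb' : ((ee k b').2 : ℕ) < k := Fin.is_lt _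
  rcases adj_cases h with ⟨hc, hl⟩ | ⟨hl, hl1, hcne, hcadj⟩ <;>
    rcases adj_cases h' with ⟨hc', hl'⟩ | ⟨hl', hl1', hcne', hcadj'⟩
  · -- radial / radial
    rw [curvef, if_pos hc, curvef, if_pos hc'] at heq
    have hrne : rad k ((ee k a).2 : ℕ) ≠ rad k ((ee k b).2 : ℕ) := by
      intro hcon; exact absurd (rad_inj k hk hcon) (by omega)
    have hrne' : rad k ((ee k a').2 : ℕ) ≠ rad k ((ee k b').2 : ℕ) := by
      intro hcon; exact absurd (rad_inj k hk hcon) (by omega)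
    obtain ⟨hm1, hm2⟩ := combo_mem (a := rad k ((ee k a).2 : ℕ))
      (b := rad k ((ee k b).2 : ℕ)) hrne ht
    obtain ⟨hm1', hm2'⟩ := combo_mem (a := rad k ((ee k a').2 : ℕ))
      (b := rad k ((ee k b').2 : ℕ)) hrne' ht'
    have hmin : 0 < min (rad k ((ee k a).2 : ℕ)) (rad k ((ee k b).2 : ℕ)) :=
      lt_min (rad_pos k hk hla) (rad_pos k hk hlb)
    have hmin' : 0 < min (rad k ((ee k a').2 : ℕ)) (rad k ((ee k b').2 : ℕ)) :=
      lt_min (rad_pos k hk hla') (rad_pos k hk hlb')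
    obtain ⟨hs, hφ⟩ := pt_inj (by linarith) (by linarith) (θs_mem _) (θs_mem _) heq
    obtain ⟨m, hb1, hb2, hmm⟩ := rad_band_loc hk hl hla hlb hm1 hm2
    obtain ⟨m', hb1', hb2', hmm'⟩ := rad_band_loc hk hl' hla' hlb' hm1' hm2'
    rw [hs] at hb1 hb2
    have hmeq : m = m' := rad_band_unique hk hb1 hb2 hb1' hb2'
    have hceq : ((ee k a).1 : ℕ) = ((ee k a').1 : ℕ) :=
      congrArg Fin.val (θs_inj hx hcirc hφ)
    apply hne
    rcases hmm with ⟨e1, e2⟩ | ⟨e1, e2⟩ <;> rcases hmm' with ⟨e1', e2'⟩ | ⟨e1', e2'⟩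
    · rw [show a = a' by rw [vert_eq_iff]; omega, show b = b' by rw [vert_eq_iff]; omega]
    · rw [show a = b' by rw [vert_eq_iff]; omega, show b = a' by rw [vert_eq_iff]; omega,
        Sym2.eq_swap]
    · rw [show a = b' by rw [vert_eq_iff]; omega, show b = a' by rw [vert_eq_iff]; omega,
        Sym2.eq_swap]
    · rw [show a = a' by rw [vert_eq_iff]; omega, show b = b' by rw [vert_eq_iff]; omega]
  · -- radial / circular
    rw [curvef, if_pos hc, curvef, if_neg hcne'] at heq
    have hrne : rad k ((ee k a).2 : ℕ) ≠ rad k ((ee k b).2 : ℕ) := by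
      intro hcon; exact absurd (rad_inj k hk hcon) (by omega)
    obtain ⟨hm1, hm2⟩ := combo_mem (a := rad k ((ee k a).2 : ℕ))
      (b := rad k ((ee k b).2 : ℕ)) hrne ht
    have hmin : 0 < min (rad k ((ee k a).2 : ℕ)) (rad k ((ee k b).2 : ℕ)) :=
      lt_min (rad_pos k hk hla) (rad_pos k hk hlb)
    have hmem' : (1-t') * θs k x (ee k a').1 + t' * θs k x (ee k b').1 ∈
        Set.Ioc (-Real.pi) Real.pi := by
      obtain ⟨c1, c2⟩ := combo_mem_Icc (a := θs k x (ee k a').1) (b := θs k x (ee k b').1)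
        (Set.mem_Icc.mpr ⟨ht'.1.le, ht'.2.le⟩)
      constructor
      · have := lt_min (θs_mem (x := x) (ee k a').1).1 (θs_mem (x := x) (ee k b').1).1
        linarith
      · have := max_le (θs_mem (x := x) (ee k a').1).2 (θs_mem (x := x) (ee k b').1).2
        linarith
    obtain ⟨hs, _⟩ := pt_inj (by linarith) (rad_pos k hk hla') (θs_mem _) hmem' heq
    obtain ⟨m, hb1, hb2, _⟩ := rad_band_loc hk hl hla hlb hm1 hm2
    rw [hs] at hb1 hb2
    exact rad_notin_band hk hb1 hb2 rfl
  · -- circular / radial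
    rw [curvef, if_neg hcne, curvef, if_pos hc'] at heq
    have hrne' : rad k ((ee k a').2 : ℕ) ≠ rad k ((ee k b').2 : ℕ) := by
      intro hcon; exact absurd (rad_inj k hk hcon) (by omega)
    obtain ⟨hm1', hm2'⟩ := combo_mem (a := rad k ((ee k a').2 : ℕ))
      (b := rad k ((ee k b').2 : ℕ)) hrne' ht'
    have hmin' : 0 < min (rad k ((ee k a').2 : ℕ)) (rad k ((ee k b').2 : ℕ)) :=
      lt_min (rad_pos k hk hla') (rad_pos k hk hlb')
    have hmem : (1-t) * θs k x (ee k a).1 + t * θs k x (ee k b).1 ∈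
        Set.Ioc (-Real.pi) Real.pi := by
      obtain ⟨c1, c2⟩ := combo_mem_Icc (a := θs k x (ee k a).1) (b := θs k x (ee k b).1)
        (Set.mem_Icc.mpr ⟨ht.1.le, ht.2.le⟩)
      constructor
      · have := lt_min (θs_mem (x := x) (ee k a).1).1 (θs_mem (x := x) (ee k b).1).1
        linarith
      · have := max_le (θs_mem (x := x) (ee k a).1).2 (θs_mem (x := x) (ee k b).1).2
        linarith
    obtain ⟨hs, _⟩ := pt_inj (rad_pos k hk hla) (by linarith) hmem (θs_mem _) heq
    obtain ⟨m', hb1', hb2', _⟩ := rad_band_loc hk hl' hla' hlb' hm1' hm2'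
    rw [← hs] at hb1' hb2'
    exact rad_notin_band hk hb1' hb2' rfl
  · -- circular / circular
    rw [curvef, if_neg hcne, curvef, if_neg hcne'] at heq
    have hθne : θs k x (ee k a).1 ≠ θs k x (ee k b).1 := by
      intro hcon; exact hcne (congrArg Fin.val (θs_inj hx hcirc hcon))
    have hθne' : θs k x (ee k a').1 ≠ θs k x (ee k b').1 := by
      intro hcon; exact hcne' (congrArg Fin.val (θs_inj hx hcirc hcon))
    obtain ⟨hm1, hm2⟩ := combo_mem (a := θs k x (ee k a).1) (b := θs k x (ee k b).1) hθne ht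
    obtain ⟨hm1', hm2'⟩ := combo_mem (a := θs k x (ee k a').1) (b := θs k x (ee k b').1)
      hθne' ht'
    have hmem : (1-t) * θs k x (ee k a).1 + t * θs k x (ee k b).1 ∈
        Set.Ioc (-Real.pi) Real.pi := by
      constructor
      · have := lt_min (θs_mem (x := x) (ee k a).1).1 (θs_mem (x := x) (ee k b).1).1
        linarith
      · have h1 := max_le (θs_mem (x := x) (ee k a).1).2 (θs_mem (x := x) (ee k b).1).2
        have h2 := le_max_left (θs k x (ee k a).1) (θs k x (ee k b).1)
        linarith
    have hmem' : (1-t') * θs k x (ee k a').1 + t' * θs k x (ee k b').1 ∈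
        Set.Ioc (-Real.pi) Real.pi := by
      constructor
      · have := lt_min (θs_mem (x := x) (ee k a').1).1 (θs_mem (x := x) (ee k b').1).1
        linarith
      · have h1 := max_le (θs_mem (x := x) (ee k a').1).2 (θs_mem (x := x) (ee k b').1).2
        linarith
    obtain ⟨hs, hφ⟩ := pt_inj (rad_pos k hk hla) (rad_pos k hk hla') hmem hmem' heq
    have hleq : ((ee k a).2 : ℕ) = ((ee k a').2 : ℕ) := rad_inj k hk hs
    obtain ⟨c1, c2, h12, hb1, hb2, hcc⟩ := circ_band_loc hx hcirc hcadj hm1 hm2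
    obtain ⟨d1, d2, h34, hb1', hb2', hdd⟩ := circ_band_loc hx hcirc hcadj' hm1' hm2'
    rw [hφ] at hb1 hb2
    have hc1d1 : c1 = d1 := band_eq hx hcirc h12 h34 hb1 hb2 hb1' hb2'
    have hc2d2 : c2 = d2 := Fin.ext (by rw [← h12, ← h34, hc1d1])
    apply hne
    rcases hcc with ⟨e1, e2⟩ | ⟨e1, e2⟩ <;> rcases hdd with ⟨e1', e2'⟩ | ⟨e1', e2'⟩
    · have h1 : a = a' := by
        rw [vert_eq_iff]
        refine ⟨congrArg Fin.val ?_, by omega⟩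
        rw [← e1, ← e1', hc1d1]
      have h2 : b = b' := by
        rw [vert_eq_iff]
        refine ⟨congrArg Fin.val ?_, by omega⟩
        rw [← e2, ← e2', hc2d2]
      rw [h1, h2]
    · have h1 : a = b' := by
        rw [vert_eq_iff]
        refine ⟨congrArg Fin.val ?_, by omega⟩
        rw [← e1, ← e1', hc1d1]
      have h2 : b = a' := by
        rw [vert_eq_iff]
        refine ⟨congrArg Fin.val ?_, by omega⟩
        rw [← e2, ← e2', hc2d2]
      rw [h1, h2, Sym2.eq_swap]
    · have h1 : a = b' := by
        rw [vert_eq_iff]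
        refine ⟨congrArg Fin.val ?_, by omega⟩
        rw [← e2, ← e2', hc2d2]
      have h2 : b = a' := by
        rw [vert_eq_iff]
        refine ⟨congrArg Fin.val ?_, by omega⟩
        rw [← e1, ← e1', hc1d1]
      rw [h1, h2, Sym2.eq_swap]
    · have h1 : a = a' := by
        rw [vert_eq_iff]
        refine ⟨congrArg Fin.val ?_, by omega⟩
        rw [← e2, ← e2', hc2d2]
      have h2 : b = b' := by
        rw [vert_eq_iff]
        refine ⟨congrArg Fin.val ?_, by omega⟩
        rw [← e1, ← e1', hc1d1]
      rw [h1, h2]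


noncomputable def embOf : PlaneEmb (GG k) where
  pos := posf k x
  pos_inj := posf_inj hx hcirc
  curve := fun a b _ => curvef k x a b
  curve_cont := fun a b _ => curvef_cont a b
  curve_zero := fun a b _ => curvef_zero a b
  curve_one := fun a b h => curvef_one h
  curve_injOn := fun _ _ h => curvef_injOn hx hcirc h
  curve_symm := fun _ _ h t => curvef_symm h t
  curve_avoid := fun _ _ h t ht w => curvef_avoid hx hcirc h ht w
  curve_disjoint := fun _ _ h _ _ h' hne t ht t' ht' =>
    curvef_disjoint hx hcirc h h' hne ht ht'

noncomputable def bvf (i : Fin k) : Fin (k*k) := vtx k ((σp k x).symm i) ⟨0, i.pos⟩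

lemma θs_symm_eq (i : Fin k) : θs k x ((σp k x).symm i) = θf k x i := by
  unfold θs
  rw [Equiv.apply_symm_apply]

include hcirc in
lemma posf_bvf (i : Fin k) : posf k x (bvf (x := x) i) = x i := by
  rw [posf, bvf, ee_vtx]
  simp only [θs_symm_eq]
  rw [x_eq_pt hcirc i]
  exact pt_congr (by simp [rad]) rfl

include hx hcirc in
lemma image_subset_disc : (embOf hx hcirc).image ⊆ {z : ℂ | ‖z‖ ≤ 1} := by
  rintro z (⟨a, rfl⟩ | hz)
  · have hk : 0 < k := hk_of a
    show ‖posf k x a‖ ≤ 1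
    rw [posf, abs_pt (rad_pos k hk (Fin.is_lt _)).le]
    exact rad_le_one k _
  · simp only [Set.mem_iUnion] at hz
    obtain ⟨a, b, h, t, ht, rfl⟩ := hz
    have hk : 0 < k := hk_of a
    show ‖(embOf hx hcirc).curve a b h t‖ ≤ 1
    show ‖curvef k x a b t‖ ≤ 1
    rw [curvef]
    split_ifs
    · obtain ⟨hm1, hm2⟩ := combo_mem_Icc (a := rad k ((ee k a).2 : ℕ))
        (b := rad k ((ee k b).2 : ℕ)) ht
      have hmin : 0 < min (rad k ((ee k a).2 : ℕ)) (rad k ((ee k b).2 : ℕ)) :=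
        lt_min (rad_pos k hk (Fin.is_lt _)) (rad_pos k hk (Fin.is_lt _))
      rw [abs_pt (by linarith)]
      have := max_le (rad_le_one k ((ee k a).2 : ℕ)) (rad_le_one k ((ee k b).2 : ℕ))
      linarith
    · rw [abs_pt (rad_pos k hk (Fin.is_lt _)).le]
      exact rad_le_one k _

include hx hcirc in
lemma boundary_eq : {z ∈ (embOf hx hcirc).image | ‖z‖ = 1} = Set.range x := by
  ext z
  constructor
  · rintro ⟨hz, habs⟩
    have hvert : ∀ a : Fin (k*k), posf k x a = z → z ∈ Set.range x := by
      rintro a rfl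
      have hk : 0 < k := hk_of a
      rw [posf, abs_pt (rad_pos k hk (Fin.is_lt _)).le] at habs
      have hl0 : ((ee k a).2 : ℕ) = 0 := rad_inj k hk (by rw [habs, rad_zero])
      refine ⟨σp k x (ee k a).1, ?_⟩
      rw [x_eq_pt hcirc, posf]
      refine pt_congr (by rw [hl0, rad_zero]) ?_
      unfold θs θf
      rfl
    rcases hz with ⟨a, rfl⟩ | hz
    · exact hvert a rfl
    · simp only [Set.mem_iUnion] at hz
      obtain ⟨a, b, h, t, ht, hteq⟩ := hz
      have hk : 0 < k := hk_of a
      rcases eq_or_lt_of_le ht.1 with h0 | h0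
      · apply hvert a
        rw [← hteq]
        show posf k x a = (embOf hx hcirc).curve a b h t
        rw [show t = 0 from h0.symm]
        exact (curvef_zero a b).symm
      rcases eq_or_lt_of_le ht.2 with h1 | h1
      · apply hvert b
        rw [← hteq]
        show posf k x b = (embOf hx hcirc).curve a b h t
        rw [h1]
        exact (curvef_one h).symm
      · exfalso
        have htI : t ∈ Set.Ioo (0:ℝ) 1 := ⟨h0, h1⟩
        rw [← hteq] at habs
        have : ‖curvef k x a b t‖ = 1 := habs
        rw [curvef] at this
        rcases adj_cases h with ⟨hc, hl⟩ | ⟨hl, hl1, hcne, hcadj⟩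
        · rw [if_pos hc] at this
          have hrne : rad k ((ee k a).2 : ℕ) ≠ rad k ((ee k b).2 : ℕ) := by
            intro hcon; exact absurd (rad_inj k hk hcon) (by omega)
          obtain ⟨hm1, hm2⟩ := combo_mem (a := rad k ((ee k a).2 : ℕ))
            (b := rad k ((ee k b).2 : ℕ)) hrne htI
          have hmin : 0 < min (rad k ((ee k a).2 : ℕ)) (rad k ((ee k b).2 : ℕ)) :=
            lt_min (rad_pos k hk (Fin.is_lt _)) (rad_pos k hk (Fin.is_lt _))
          rw [abs_pt (by linarith)] at this
          have := max_le (rad_le_one k ((ee k a).2 : ℕ)) (rad_le_one k ((ee k b).2 : ℕ))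
          linarith
        · rw [if_neg hcne] at this
          rw [abs_pt (rad_pos k hk (Fin.is_lt _)).le] at this
          have : rad k ((ee k a).2 : ℕ) < rad k 0 := (rad_lt_rad_iff k hk).mpr (by omega)
          rw [rad_zero] at this
          linarith [‹‖_‖ = 1›]
  · rintro ⟨i, rfl⟩
    refine ⟨Or.inl ⟨bvf (x := x) i, posf_bvf hcirc i⟩, hcirc i⟩

end Fields

section Walks

lemma grid_walk (hk : 0 < k) {a b hh : ℕ} (hab : a < b) (hbk : b < k) (hh1 : 1 ≤ hh)
    (hhk : hh < k) :
    ∃ w : (GG k).Walk (vtx k ⟨a, by omega⟩ ⟨0, hk⟩) (vtx k ⟨b, hbk⟩ ⟨0, hk⟩),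
      w.IsPath ∧ ∀ z ∈ w.support, ∃ (c l : ℕ) (hc : c < k) (hl : l < k),
        z = vtx k ⟨c, hc⟩ ⟨l, hl⟩ ∧
        (((c = a ∨ c = b) ∧ l ≤ hh) ∨ (a ≤ c ∧ c ≤ b ∧ l = hh)) := by
  classical
  set m := 2*hh + (b - a) with hm
  set colf : ℕ → ℕ := fun t => if t ≤ hh then a else if t ≤ hh + (b-a) then a + (t-hh) else b
    with hcolf
  set levf : ℕ → ℕ := fun t =>
    if t ≤ hh then t else if t ≤ hh + (b-a) then hh else hh + (hh + (b - a)) - t with hlevf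
  have hbnd : ∀ t, t ≤ m → colf t < k ∧ levf t < k := by
    intro t htm
    simp only [hcolf, hlevf]
    split_ifs <;> omega
  set f : ℕ → Fin (k*k) := fun t => vtx k ⟨colf t % k, Nat.mod_lt _ hk⟩ ⟨levf t % k, Nat.mod_lt _ hk⟩
    with hf
  have hfval : ∀ (t : ℕ) (htm : t ≤ m), f t = vtx k ⟨colf t, (hbnd t htm).1⟩ ⟨levf t, (hbnd t htm).2⟩ := by
    intro t htm
    show (ee k).symm _ = (ee k).symm _
    exact congrArg (ee k).symm (Prod.ext (Fin.ext (Nat.mod_eq_of_lt (hbnd t htm).1))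
      (Fin.ext (Nat.mod_eq_of_lt (hbnd t htm).2)))
  have hadj : ∀ i, i < m → (GG k).Adj (f i) (f (i+1)) := by
    intro i him
    show _ ∨ _
    simp only [hf, ee_vtx]
    simp only [Nat.mod_eq_of_lt (hbnd i (by omega)).1, Nat.mod_eq_of_lt (hbnd i (by omega)).2,
      Nat.mod_eq_of_lt (hbnd (i+1) (by omega)).1, Nat.mod_eq_of_lt (hbnd (i+1) (by omega)).2]
    simp only [hcolf, hlevf]
    split_ifs <;> omega
  have hinj : ∀ i, i ≤ m → ∀ j, j ≤ m → f i = f j → i = j := by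
    intro i hi j hj hij
    rw [hfval i hi, hfval j hj] at hij
    obtain ⟨h1, h2⟩ := vtx_inj k hij
    have h1' := congrArg Fin.val h1
    have h2' := congrArg Fin.val h2
    simp only [hcolf, hlevf] at h1' h2'
    split_ifs at h1' h2' <;> omega
  obtain ⟨w, hw, hsupp⟩ := exists_path_ofFn f m (fun i hi => hadj i hi) hinj
  have hf0 : f 0 = vtx k ⟨a, by omega⟩ ⟨0, hk⟩ := by
    rw [hfval 0 (Nat.zero_le m)]
    show (ee k).symm _ = (ee k).symm _
    refine congrArg (ee k).symm (Prod.ext (Fin.ext ?_) (Fin.ext ?_)) <;>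
      simp only [hcolf, hlevf] <;> split_ifs <;> omega
  have hfm : f m = vtx k ⟨b, hbk⟩ ⟨0, hk⟩ := by
    rw [hfval m le_rfl]
    show (ee k).symm _ = (ee k).symm _
    refine congrArg (ee k).symm (Prod.ext (Fin.ext ?_) (Fin.ext ?_)) <;>
      simp only [hcolf, hlevf] <;> split_ifs <;> omega
  refine ⟨(w.copy hf0 hfm), ?_, ?_⟩
  · rwa [SimpleGraph.Walk.isPath_copy]
  · intro z hz
    rw [SimpleGraph.Walk.support_copy] at hz
    obtain ⟨i, hi, rfl⟩ := (hsupp z).1 hz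
    rw [hfval i hi]
    exact ⟨colf i, levf i, (hbnd i hi).1, (hbnd i hi).2, rfl, by
      simp only [hcolf, hlevf]; split_ifs <;> omega⟩

end Walks

section Routing
variable (hx : Function.Injective x) (hcirc : ∀ i, ‖x i‖ = 1)

lemma exp_shift (θ : ℝ) :
    Complex.exp (Complex.I * ((θ + 2*Real.pi : ℝ) : ℂ)) = Complex.exp (Complex.I * (θ:ℂ)) := by
  push_cast
  rw [mul_add, Complex.exp_add, mul_comm Complex.I ((2:ℂ)*(Real.pi:ℂ))]
  rw [Complex.exp_two_pi_mul_I, mul_one]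

include hcirc in
lemma x_exp (i : Fin k) :
    x i = Complex.exp (Complex.I * ((θs k x ((σp k x).symm i) : ℝ) : ℂ)) := by
  rw [x_eq_pt hcirc i, pt, θs_symm_eq]
  push_cast
  rw [one_mul, mul_comm]

lemma two_card_le (T : Finset (Fin k × Fin k)) (hT : DisjointPairsIdx T) : 2 * T.card ≤ k := by
  classical
  set U1 := T.image Prod.fst with hU1
  set U2 := T.image Prod.snd with hU2
  have h1 : U1.card = T.card := Finset.card_image_of_injOn (by
    intro p hp q hq h
    by_contra hne
    exact (hT.2 p hp q hq hne).1 h)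
  have h2 : U2.card = T.card := Finset.card_image_of_injOn (by
    intro p hp q hq h
    by_contra hne
    exact (hT.2 p hp q hq hne).2.2.2 h)
  have hdisj : Disjoint U1 U2 := by
    rw [Finset.disjoint_left]
    rintro a ha1 ha2
    rw [hU1, Finset.mem_image] at ha1
    rw [hU2, Finset.mem_image] at ha2
    obtain ⟨p, hp, hpa⟩ := ha1
    obtain ⟨q, hq, hqa⟩ := ha2
    rcases eq_or_ne p q with rfl | hne
    · exact hT.1 p hp (hpa.trans hqa.symm)
    · exact (hT.2 p hp q hq hne).2.1 (hpa.trans hqa.symm)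
  have hun : (U1 ∪ U2).card = U1.card + U2.card := Finset.card_union_of_disjoint hdisj
  have hle : (U1 ∪ U2).card ≤ k := by
    have := Finset.card_le_univ (U1 ∪ U2)
    simpa using this
  omega


include hx hcirc in
lemma noncross (T : Finset (Fin k × Fin k)) (hT : DisjointPairsIdx T) (hcf : CrossFree x T)
    {p q : Fin k × Fin k} (hp : p ∈ T) (hq : q ∈ T) (hne : p ≠ q) :
    ¬(min (((σp k x).symm p.1 : ℕ)) (((σp k x).symm p.2 : ℕ)) <
        min (((σp k x).symm q.1 : ℕ)) (((σp k x).symm q.2 : ℕ)) ∧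
      min (((σp k x).symm q.1 : ℕ)) (((σp k x).symm q.2 : ℕ)) <
        max (((σp k x).symm p.1 : ℕ)) (((σp k x).symm p.2 : ℕ)) ∧
      max (((σp k x).symm p.1 : ℕ)) (((σp k x).symm p.2 : ℕ)) <
        max (((σp k x).symm q.1 : ℕ)) (((σp k x).symm q.2 : ℕ))) := by
  rintro ⟨h1, h2, h3⟩
  set fa := (σp k x).symm p.1 with hfa
  set fb := (σp k x).symm p.2 with hfb
  set ga := (σp k x).symm q.1 with hga
  set gb := (σp k x).symm q.2 with hgb
  have hABp : (fa : ℕ) ≠ (fb : ℕ) := by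
    intro h
    exact hT.1 p hp ((σp k x).symm.injective (Fin.ext h))
  have hABq : (ga : ℕ) ≠ (gb : ℕ) := by
    intro h
    exact hT.1 q hq ((σp k x).symm.injective (Fin.ext h))
  have hlt : ∀ u v : Fin k, (u : ℕ) < (v : ℕ) → θs k x u < θs k x v := by
    intro u v h
    exact (θs_lt_iff hx hcirc).mpr (Fin.lt_def.mpr h)
  have hmem : ∀ u : Fin k, θs k x u ∈ Set.Ioc (-Real.pi) Real.pi := fun u => θs_mem u
  have hpi := Real.pi_pos
  have hxp1 := x_exp hcirc p.1
  have hxp2 := x_exp hcirc p.2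
  have hxq1 := x_exp hcirc q.1
  have hxq2 := x_exp hcirc q.2
  rw [← hfa] at hxp1
  rw [← hfb] at hxp2
  rw [← hga] at hxq1
  rw [← hgb] at hxq2
  apply hcf
  rcases lt_or_gt_of_ne hABp with hab | hab <;> rcases lt_or_gt_of_ne hABq with hcd | hcd
  · -- fa < fb, ga < gb : cols (fa, ga, fb, gb) increasing
    refine ⟨p, hp, q, hq, hne, θs k x fa, θs k x ga, θs k x fb, θs k x gb,
      hlt _ _ (by omega), hlt _ _ (by omega), hlt _ _ (by omega), ?_, hxp1, hxq1, hxp2, hxq2⟩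
    have := (hmem fa).1
    have := (hmem gb).2
    linarith
  · -- fa < fb, gb < ga : cols (fa, gb, fb, ga); witness (q,p): (ga, fa, gb, fb)
    refine ⟨q, hq, p, hp, hne.symm, θs k x ga, θs k x fa + 2*Real.pi,
      θs k x gb + 2*Real.pi, θs k x fb + 2*Real.pi, ?_, ?_, ?_, ?_, hxq1, ?_, ?_, ?_⟩
    · have := (hmem ga).2
      have := (hmem fa).1
      linarith
    · have := hlt fa gb (by omega)
      linarith
    · have := hlt gb fb (by omega)
      linarith
    · have := hlt fb ga (by omega)
      linarith
    · rw [exp_shift]; exact hxp1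
    · rw [exp_shift]; exact hxq2
    · rw [exp_shift]; exact hxp2
  · -- fb < fa, ga < gb : cols (fb, ga, fa, gb); witness (q,p): (ga, fa, gb, fb) order θ2,θ3,θ4,θ1+2π
    refine ⟨q, hq, p, hp, hne.symm, θs k x ga, θs k x fa,
      θs k x gb, θs k x fb + 2*Real.pi, hlt _ _ (by omega), hlt _ _ (by omega), ?_, ?_,
      hxq1, hxp1, hxq2, ?_⟩
    · have := (hmem gb).2
      have := (hmem fb).1
      linarith
    · have := hlt fb ga (by omega)
      linarith
    · rw [exp_shift]; exact hxp2
  · -- fb < fa, gb < ga : cols (fb, gb, fa, ga); witness (p,q): (fa, ga, fb+2π, gb+2π)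
    refine ⟨p, hp, q, hq, hne, θs k x fa, θs k x ga, θs k x fb + 2*Real.pi,
      θs k x gb + 2*Real.pi, hlt _ _ (by omega), ?_, ?_, ?_, hxp1, hxq1, ?_, ?_⟩
    · have := (hmem ga).2
      have := (hmem fb).1
      linarith
    · have := hlt fb gb (by omega)
      linarith
    · have := hlt gb fa (by omega)
      linarith
    · rw [exp_shift]; exact hxp2
    · rw [exp_shift]; exact hxq2


include hx hcirc in
lemma routing (T : Finset (Fin k × Fin k)) (hT : DisjointPairsIdx T) (hcf : CrossFree x T) :
    ∃ P : ∀ p ∈ T, (GG k).Walk (bvf (x := x) p.1) (bvf (x := x) p.2),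
      (∀ p hp, (P p hp).IsPath) ∧
      ∀ p hp q hq, p ≠ q → ∀ w, w ∈ (P p hp).support → w ∉ (P q hq).support := by
  classical
  rcases T.eq_empty_or_nonempty with rfl | ⟨p0, hp0⟩
  · exact ⟨fun p hp => absurd hp (by simp), fun p hp => absurd hp (by simp),
      fun p hp => absurd hp (by simp)⟩
  have hk : 0 < k := p0.1.pos
  set A : (Fin k × Fin k) → ℕ := fun p => ((σp k x).symm p.1 : ℕ) with hA
  set B : (Fin k × Fin k) → ℕ := fun p => ((σp k x).symm p.2 : ℕ) with hB
  have hAk : ∀ p, A p < k := fun p => Fin.is_lt _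
  have hBk : ∀ p, B p < k := fun p => Fin.is_lt _
  have hAB : ∀ p ∈ T, A p ≠ B p := by
    intro p hp h
    exact hT.1 p hp ((σp k x).symm.injective (Fin.ext h))
  have hdist : ∀ p ∈ T, ∀ q ∈ T, p ≠ q →
      A p ≠ A q ∧ A p ≠ B q ∧ B p ≠ A q ∧ B p ≠ B q := by
    intro p hp q hq hne
    obtain ⟨d1, d2, d3, d4⟩ := hT.2 p hp q hq hne
    refine ⟨?_, ?_, ?_, ?_⟩ <;> intro h
    · exact d1 ((σp k x).symm.injective (Fin.ext h))
    · exact d2 ((σp k x).symm.injective (Fin.ext h))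
    · exact d3 ((σp k x).symm.injective (Fin.ext h))
    · exact d4 ((σp k x).symm.injective (Fin.ext h))
  have hnc : ∀ p ∈ T, ∀ q ∈ T, p ≠ q →
      ¬(min (A p) (B p) < min (A q) (B q) ∧ min (A q) (B q) < max (A p) (B p) ∧
        max (A p) (B p) < max (A q) (B q)) := by
    intro p hp q hq hne
    exact noncross hx hcirc T hT hcf hp hq hne
  have hcard2 : 2 * T.card ≤ k := two_card_le T hT
  have hTpos : 1 ≤ T.card := Finset.card_pos.mpr ⟨p0, hp0⟩
  set ht : (Fin k × Fin k) → ℕ := fun p =>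
    (T.filter (fun r => min (A p) (B p) ≤ min (A r) (B r) ∧
      max (A r) (B r) ≤ max (A p) (B p))).card with hht
  have hht1 : ∀ p ∈ T, 1 ≤ ht p := by
    intro p hp
    refine Finset.card_pos.mpr ⟨p, ?_⟩
    simp only [Finset.mem_filter]
    exact ⟨hp, le_rfl, le_rfl⟩
  have hhtk : ∀ p ∈ T, ht p < k := by
    intro p hp
    have := Finset.card_filter_le T (fun r => min (A p) (B p) ≤ min (A r) (B r) ∧
      max (A r) (B r) ≤ max (A p) (B p))
    simp only [hht]
    omega
  have hnest : ∀ p ∈ T, ∀ q ∈ T, min (A p) (B p) < min (A q) (B q) →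
      max (A q) (B q) < max (A p) (B p) → ht q < ht p := by
    intro p hp q hq hlo hhi
    apply Finset.card_lt_card
    rw [Finset.ssubset_iff_of_subset]
    · refine ⟨p, ?_, ?_⟩
      · simp only [Finset.mem_filter]
        exact ⟨hp, le_rfl, le_rfl⟩
      · simp only [Finset.mem_filter]
        push_neg
        intro _ h
        omega
    · intro r hr
      simp only [Finset.mem_filter] at hr ⊢
      exact ⟨hr.1, by omega, by omega⟩
  have hW : ∀ p, p ∈ T → ∃ w : (GG k).Walk (bvf (x := x) p.1) (bvf (x := x) p.2),
      w.IsPath ∧ ∀ z ∈ w.support, ∃ (c l : Fin k), z = vtx k c l ∧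
        ((((c:ℕ) = A p ∨ (c:ℕ) = B p) ∧ (l:ℕ) ≤ ht p) ∨
          (min (A p) (B p) ≤ (c:ℕ) ∧ (c:ℕ) ≤ max (A p) (B p) ∧ (l:ℕ) = ht p)) := by
    intro p hp
    have he1 : vtx k ⟨A p, hAk p⟩ ⟨0, hk⟩ = bvf (x := x) p.1 := by
      unfold bvf
      congr 1 <;> exact Fin.ext rfl
    have he2 : vtx k ⟨B p, hBk p⟩ ⟨0, hk⟩ = bvf (x := x) p.2 := by
      unfold bvf
      congr 1 <;> exact Fin.ext rfl
    rcases lt_or_gt_of_ne (hAB p hp) with hab | hab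
    · obtain ⟨w, hw, hs⟩ := grid_walk hk hab (hBk p) (hht1 p hp) (hhtk p hp)
      refine ⟨w.copy he1 he2, by rwa [SimpleGraph.Walk.isPath_copy], ?_⟩
      intro z hz
      rw [SimpleGraph.Walk.support_copy] at hz
      obtain ⟨c, l, hc, hl, rfl, hcond⟩ := hs z hz
      exact ⟨⟨c, hc⟩, ⟨l, hl⟩, rfl, by simp only []; omega⟩
    · obtain ⟨w, hw, hs⟩ := grid_walk hk hab (hAk p) (hht1 p hp) (hhtk p hp)
      refine ⟨(w.reverse).copy he1 he2, ?_, ?_⟩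
      · rw [SimpleGraph.Walk.isPath_copy]
        exact hw.reverse
      · intro z hz
        rw [SimpleGraph.Walk.support_copy, SimpleGraph.Walk.support_reverse,
          List.mem_reverse] at hz
        obtain ⟨c, l, hc, hl, rfl, hcond⟩ := hs z hz
        exact ⟨⟨c, hc⟩, ⟨l, hl⟩, rfl, by simp only []; omega⟩
  set P : ∀ p ∈ T, (GG k).Walk (bvf (x := x) p.1) (bvf (x := x) p.2) :=
    fun p hp => (hW p hp).choose with hP
  refine ⟨P, fun p hp => (hW p hp).choose_spec.1, ?_⟩
  intro p hp q hq hpq z hzp hzq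
  obtain ⟨c, l, rfl, hcond⟩ := (hW p hp).choose_spec.2 z hzp
  obtain ⟨c', l', heq, hcond'⟩ := (hW q hq).choose_spec.2 _ hzq
  obtain ⟨hcc, hll⟩ := vtx_inj k heq
  have hcv : (c : ℕ) = (c' : ℕ) := congrArg Fin.val hcc
  have hlv : (l : ℕ) = (l' : ℕ) := congrArg Fin.val hll
  have hd := hdist p hp q hq hpq
  have hn1 := hnc p hp q hq hpq
  have hn2 := hnc q hq p hp hpq.symm
  have hn3 := hnest p hp q hq
  have hn4 := hnest q hq p hp
  omega

end Routing
end Stmt15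


/-- Single-face gadget: for any `k` points `X` on the unit circle there is a plane graph
`H` on at most `k²` vertices, properly drawn in the closed unit disc with
`H ∩ circle = X`, in which every cross-free set of disjoint pairs of boundary points is
realizable by vertex-disjoint paths. -/
theorem stmt15 (k : ℕ) (x : Fin k → ℂ) (hx : Function.Injective x)
    (hcirc : ∀ i, ‖x i‖ = 1) :
    ∃ (n : ℕ) (_ : n ≤ k * k) (G : SimpleGraph (Fin n)) (emb : PlaneEmb G)
      (bv : Fin k → Fin n),
      (∀ i, emb.pos (bv i) = x i) ∧
      emb.image ⊆ {z : ℂ | ‖z‖ ≤ 1} ∧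
      {z ∈ emb.image | ‖z‖ = 1} = Set.range x ∧
      ∀ T : Finset (Fin k × Fin k), DisjointPairsIdx T → CrossFree x T →
        ∃ P : ∀ p ∈ T, G.Walk (bv p.1) (bv p.2),
          (∀ p hp, (P p hp).IsPath) ∧
          ∀ p hp q hq, p ≠ q → ∀ w, w ∈ (P p hp).support → w ∉ (P q hq).support := by
  refine ⟨k*k, le_rfl, Stmt15.GG k, Stmt15.embOf hx hcirc,
    fun i => Stmt15.bvf (x := x) i, ?_, ?_, ?_, ?_⟩
  · intro i
    exact Stmt15.posf_bvf hcirc i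
  · exact Stmt15.image_subset_disc hx hcirc
  · exact Stmt15.boundary_eq hx hcirc
  · intro T hdp hcf
    exact Stmt15.routing hx hcirc T hdp hcf
end
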